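/- arXiv:1004.2480 — 3 statements merged into one kernel-verified Lean document; each statement's English description precedes it below -/
import Mathlib

section
/- Let L/K be a totally ramified Galois extension of local fields whose degree n is a power of the residue characteristic p > 0. Then for every finite tamely ramified extension K̃/K (in a fixed algebraic closure), VC(K̃L/K̃) implies VC(L/K). -/
/-- A local field structure on a field `K`: a normalized (surjective) discrete
valuation `v : K* ↠ ℤ`, extended by a junk value at `0`, with respect to which
`K` is complete. -/
structure LocalFieldStruct (K : Type) [Field K] where
  /-- the valuation; its value at `0` is irrelevant -/
  v : K → ℤ
  v_mul : ∀ x y : K, x ≠ 0 → y ≠ 0 → v (x * y) = v x + v y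
  v_add : ∀ x y : K, x ≠ 0 → y ≠ 0 → x + y ≠ 0 → min (v x) (v y) ≤ v (x + y)
  v_surj : ∀ n : ℤ, ∃ x : K, x ≠ 0 ∧ v x = n
  complete : ∀ a : ℕ → K,
      (∀ N : ℤ, ∃ M : ℕ, ∀ m : ℕ, M ≤ m → ∀ n : ℕ, M ≤ n →
        a m = a n ∨ N ≤ v (a m - a n)) →
      ∃ x : K, ∀ N : ℤ, ∃ M : ℕ, ∀ n : ℕ, M ≤ n → a n = x ∨ N ≤ v (a n - x)

namespace LocalFieldStruct

variable {K L : Type} [Field K] [Field L]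

/-- `x` lies in the valuation ring `O_K`. -/
def Integral (w : LocalFieldStruct K) (x : K) : Prop :=
  x = 0 ∨ 0 ≤ w.v x

/-- The residue characteristic of `K` is the prime `p`, i.e. `p` maps to `0`
in the residue field of the valuation ring. -/
def ResidueCharP (w : LocalFieldStruct K) (p : ℕ) : Prop :=
  p.Prime ∧ ((p : K) = 0 ∨ 0 < w.v (p : K))

/-- `K` has mixed characteristic `(0, p)`: `K` has characteristic `0` and its
residue field has characteristic `p > 0`. -/
def MixedChar (w : LocalFieldStruct K) (p : ℕ) : Prop :=
  CharZero K ∧ p.Prime ∧ 0 < w.v (p : K)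

/-- `e` is the ramification index `e_{L/K}`: the valuation of `L` restricted to
`K` is `e` times the valuation of `K`. -/
def IsRamificationIndex (wK : LocalFieldStruct K) (wL : LocalFieldStruct L)
    [Algebra K L] (e : ℕ) : Prop :=
  0 < e ∧ ∀ x : K, x ≠ 0 → wL.v (algebraMap K L x) = (e : ℤ) * wK.v x

/-- `d` is the valuation `d_{L/K}` of the different of `L/K`, characterized by
`Tr_{L/K}(𝔭_L^i) ⊆ O_K ↔ i ≥ -d` for all `i : ℤ`. -/
def IsDifferentVal (wK : LocalFieldStruct K) (wL : LocalFieldStruct L)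
    [Algebra K L] (d : ℤ) : Prop :=
  ∀ i : ℤ,
    (∀ x : L, (x ≠ 0 → i ≤ wL.v x) → wK.Integral (Algebra.trace K L x)) ↔ -d ≤ i

section Basic
variable {K : Type} [Field K] (w : LocalFieldStruct K)

theorem v_one : w.v 1 = 0 := by
  have := w.v_mul 1 1 one_ne_zero one_ne_zero
  simpa using this.symm

theorem v_neg_one : w.v (-1) = 0 := by
  have := w.v_mul (-1) (-1) (by norm_num) (by norm_num)
  simp only [neg_mul, one_mul, neg_neg, w.v_one] at this
  omega

theorem v_neg (x : K) : w.v (-x) = w.v x := by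
  rcases eq_or_ne x 0 with rfl | hx
  · simp
  · have := w.v_mul (-1) x (by norm_num) hx
    simpa [w.v_neg_one] using this

theorem v_inv (x : K) (hx : x ≠ 0) : w.v x⁻¹ = - w.v x := by
  have := w.v_mul x x⁻¹ hx (inv_ne_zero hx)
  rw [mul_inv_cancel₀ hx, w.v_one] at this
  omega

theorem v_pow (x : K) (hx : x ≠ 0) (n : ℕ) : w.v (x ^ n) = n * w.v x := by
  induction n with
  | zero => simpa using w.v_one
  | succ n ih =>
      rw [pow_succ, w.v_mul _ _ (pow_ne_zero _ hx) hx, ih]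
      push_cast; ring

theorem v_sub_comm (x y : K) : w.v (x - y) = w.v (y - x) := by
  rw [← w.v_neg (x - y)]; congr 1; ring

end Basic

section Norm

variable {K V : Type} [Field K] [AddCommGroup V] [Module K V] (w : LocalFieldStruct K)
variable (N : V → ℤ)

/-- bounded-below sums -/
theorem nsum_min
    (hadd : ∀ x y : V, x ≠ 0 → y ≠ 0 → x + y ≠ 0 → min (N x) (N y) ≤ N (x + y))
    {ι : Type} (s : Finset ι) (f : ι → V) (B : ℤ)
    (hf : ∀ i ∈ s, f i = 0 ∨ B ≤ N (f i)) :
    (∑ i ∈ s, f i) = 0 ∨ B ≤ N (∑ i ∈ s, f i) := by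
  classical
  induction s using Finset.induction_on with
  | empty => simp
  | @insert a s ha ih =>
      have hrest := ih (fun i hi => hf i (Finset.mem_insert_of_mem hi))
      rw [Finset.sum_insert ha]
      rcases eq_or_ne (f a) 0 with hfa | hfa
      · simpa [hfa] using hrest
      · have hA : B ≤ N (f a) := (hf a (Finset.mem_insert_self a s)).resolve_left hfa
        rcases eq_or_ne (∑ i ∈ s, f i) 0 with hs | hs
        · simp [hs, hA]
        · have hB : B ≤ N (∑ i ∈ s, f i) := hrest.resolve_left hs
          rcases eq_or_ne (f a + ∑ i ∈ s, f i) 0 with hz | hz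
          · exact Or.inl hz
          · have := hadd (f a) (∑ i ∈ s, f i) hfa hs hz
            right; omega

/-- if `N x < N y` then `x + y ≠ 0` and `N (x+y) = N x`. -/
theorem nadd_eq_left
    (hadd : ∀ x y : V, x ≠ 0 → y ≠ 0 → x + y ≠ 0 → min (N x) (N y) ≤ N (x + y))
    (hneg : ∀ x : V, N (-x) = N x)
    {x y : V} (hx : x ≠ 0) (hy : y ≠ 0) (hlt : N x < N y) :
    x + y ≠ 0 ∧ N (x + y) = N x := by
  have hz : x + y ≠ 0 := by
    intro h
    have hyx : y = -x := eq_neg_of_add_eq_zero_right h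
    rw [hyx, hneg] at hlt; omega
  refine ⟨hz, ?_⟩
  have h1 := hadd x y hx hy hz
  have h2 := hadd (x + y) (-y) hz (neg_ne_zero.mpr hy) (by simpa using hx)
  rw [hneg] at h2
  simp only [add_neg_cancel_right] at h2
  omega

/-- sums of terms with pairwise distinct `N`-values -/
theorem nsum_strict
    (hadd : ∀ x y : V, x ≠ 0 → y ≠ 0 → x + y ≠ 0 → min (N x) (N y) ≤ N (x + y))
    (hneg : ∀ x : V, N (-x) = N x)
    {ι : Type} (s : Finset ι) (f : ι → V)
    (hne : s.Nonempty) (h0 : ∀ i ∈ s, f i ≠ 0)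
    (hd : ∀ i ∈ s, ∀ j ∈ s, i ≠ j → N (f i) ≠ N (f j)) :
    (∑ i ∈ s, f i) ≠ 0 ∧
      ∃ i0 ∈ s, N (∑ i ∈ s, f i) = N (f i0) ∧ ∀ j ∈ s, N (f i0) ≤ N (f j) := by
  classical
  induction s using Finset.induction_on with
  | empty => exact absurd hne (by simp)
  | @insert a s ha ih =>
      rcases eq_or_ne s ∅ with rfl | hsne
      · refine ⟨by simpa using h0 a (by simp), a, by simp, by simp⟩
      · have hsne' : s.Nonempty := Finset.nonempty_iff_ne_empty.mpr hsne
        obtain ⟨hSne, i0, hi0, hNi0, hmin⟩ :=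
          ih hsne' (fun i hi => h0 i (Finset.mem_insert_of_mem hi))
            (fun i hi j hj hij =>
              hd i (Finset.mem_insert_of_mem hi) j (Finset.mem_insert_of_mem hj) hij)
        have hfa : f a ≠ 0 := h0 a (Finset.mem_insert_self a s)
        have hdiff : N (f a) ≠ N (∑ i ∈ s, f i) := by
          rw [hNi0]
          exact hd a (Finset.mem_insert_self a s) i0 (Finset.mem_insert_of_mem hi0)
            (fun h => ha (h ▸ hi0))
        rw [Finset.sum_insert ha]
        rcases lt_or_gt_of_ne hdiff with hlt | hgt
        · obtain ⟨hz, hval⟩ := nadd_eq_left N hadd hneg hfa hSne hlt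
          refine ⟨hz, a, Finset.mem_insert_self a s, hval, ?_⟩
          intro j hj
          rcases Finset.mem_insert.mp hj with rfl | hj
          · exact le_refl _
          · rw [hNi0] at hlt
            exact le_trans (le_of_lt hlt) (hmin j hj)
        · have hlt' : N (∑ i ∈ s, f i) < N (f a) := hgt
          obtain ⟨hz, hval⟩ := nadd_eq_left N hadd hneg hSne hfa hlt'
          rw [add_comm] at hz hval
          refine ⟨hz, i0, Finset.mem_insert_of_mem hi0, by rw [hval, hNi0], ?_⟩
          intro j hj
          rcases Finset.mem_insert.mp hj with rfl | hj
          · rw [← hNi0]; exact le_of_lt hlt'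
          · exact hmin j hj

/-- The key finite-dimensional norm-equivalence lemma over a complete base. -/
theorem norm_equiv
    (hadd : ∀ x y : V, x ≠ 0 → y ≠ 0 → x + y ≠ 0 → min (N x) (N y) ≤ N (x + y))
    (hneg : ∀ x : V, N (-x) = N x)
    (g : ℤ) (hg : 0 < g)
    (hsmul : ∀ (c : K) (x : V), c ≠ 0 → x ≠ 0 → N (c • x) = g * w.v c + N x) :
    ∀ (n : ℕ) (e : Fin n → V), LinearIndependent K e →
      ∃ C : ℤ, ∀ c : Fin n → K, ∀ i : Fin n, c i ≠ 0 →
        N (∑ j, c j • e j) ≤ C + g * w.v (c i) := by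
  intro n
  induction n with
  | zero => exact fun e _ => ⟨0, fun c i => i.elim0⟩
  | succ n IH =>
    intro e he
    by_contra hCon
    push_neg at hCon
    have he0 : ∀ j, e j ≠ 0 := fun j => he.ne_zero j
    have hz_ne : ∀ c : Fin (n+1) → K, (∃ i, c i ≠ 0) → (∑ j, c j • e j) ≠ 0 := by
      intro c ⟨i, hi⟩ hzero
      exact hi (Fintype.linearIndependent_iff.mp he c hzero i)
    -- Step 1 : normalized bad sequences
    have hQ : ∀ m : ℕ, ∃ c : Fin (n+1) → K,
        (∀ j, c j ≠ 0 → 0 ≤ w.v (c j)) ∧ (∃ j, c j ≠ 0 ∧ w.v (c j) = 0) ∧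
        (m : ℤ) ≤ N (∑ j, c j • e j) := by
      intro m
      obtain ⟨c, i, hci, hlt⟩ := hCon m
      classical
      have hsupp : (Finset.univ.filter (fun j => c j ≠ 0)).Nonempty :=
        ⟨i, by simp [hci]⟩
      obtain ⟨j0, hj0mem, hj0min⟩ :=
        Finset.exists_min_image _ (fun j => w.v (c j)) hsupp
      have hj0 : c j0 ≠ 0 := (Finset.mem_filter.mp hj0mem).2
      obtain ⟨u, hu0, huv⟩ := w.v_surj (- w.v (c j0))
      have hzne : (∑ j, c j • e j) ≠ 0 := hz_ne c ⟨i, hci⟩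
      have hsum : (∑ j, (u * c j) • e j) = u • ∑ j, c j • e j := by
        rw [Finset.smul_sum]
        exact Finset.sum_congr rfl fun j _ => (smul_smul u (c j) (e j)).symm
      refine ⟨fun j => u * c j, ?_, ⟨j0, mul_ne_zero hu0 hj0, ?_⟩, ?_⟩
      · intro j hj
        have hcj : c j ≠ 0 := fun h => hj (by simp [h])
        have hjmem : j ∈ Finset.univ.filter (fun j => c j ≠ 0) := by simp [hcj]
        rw [w.v_mul u (c j) hu0 hcj, huv]
        have := hj0min j hjmem
        omega
      · rw [w.v_mul u (c j0) hu0 hj0, huv]; omega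
      · rw [hsum, hsmul u _ hu0 hzne, huv]
        have himem : i ∈ Finset.univ.filter (fun j => c j ≠ 0) := by simp [hci]
        have := hj0min i himem
        nlinarith [hlt]
    choose cs h1 h2 h3 using hQ
    -- Step 2 : pigeonhole an index
    have hpig : ∃ jstar : Fin (n+1), ∀ M : ℕ, ∃ m : ℕ, M ≤ m ∧
        cs m jstar ≠ 0 ∧ w.v (cs m jstar) = 0 := by
      by_contra hcon
      push_neg at hcon
      choose Mf hMf using hcon
      classical
      set Mmax := Finset.univ.sup Mf with hMmax
      obtain ⟨j, hj0, hjv⟩ := h2 Mmax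
      exact hMf j Mmax (Finset.le_sup (Finset.mem_univ j)) hj0 hjv
    obtain ⟨jstar, hjstar⟩ := hpig
    have hfreq : ∃ᶠ m in Filter.atTop, (cs m jstar ≠ 0 ∧ w.v (cs m jstar) = 0) :=
      Filter.frequently_atTop.mpr fun M => by
        obtain ⟨m, hm, hne, hv⟩ := hjstar M
        exact ⟨m, hm, hne, hv⟩
    obtain ⟨φ, hφmono, hφP⟩ := Filter.extraction_of_frequently_atTop hfreq
    -- Step 3 : rescale to make the jstar coordinate 1
    set d : ℕ → Fin (n+1) → K := fun k j => cs (φ k) j / cs (φ k) jstar with hd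
    have hdstar : ∀ k, d k jstar = 1 := fun k => div_self (hφP k).1
    have hdval : ∀ k j, d k j ≠ 0 → 0 ≤ w.v (d k j) := by
      intro k j hkj
      have hden := (hφP k).1
      have hnum : cs (φ k) j ≠ 0 := by
        intro h; apply hkj; simp [hd, h]
      rw [hd]
      simp only []
      rw [div_eq_mul_inv, w.v_mul _ _ hnum (inv_ne_zero hden), w.v_inv _ hden,
        (hφP k).2]
      have := h1 (φ k) j hnum
      omega
    set wk : ℕ → V := fun k => ∑ j, d k j • e j with hwk
    have hwk0 : ∀ k, wk k ≠ 0 := fun k => hz_ne _ ⟨jstar, by rw [hdstar]; exact one_ne_zero⟩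
    have hwkN : ∀ k : ℕ, (k : ℤ) ≤ N (wk k) := by
      intro k
      have hden := (hφP k).1
      have hzne : (∑ j, cs (φ k) j • e j) ≠ 0 := hz_ne _ ⟨jstar, hden⟩
      have hsum : wk k = (cs (φ k) jstar)⁻¹ • ∑ j, cs (φ k) j • e j := by
        rw [hwk, Finset.smul_sum]
        refine Finset.sum_congr rfl fun j _ => ?_
        rw [smul_smul, hd]
        congr 1
        field_simp
      rw [hsum, hsmul _ _ (inv_ne_zero hden) hzne, w.v_inv _ hden, (hφP k).2]
      have h3' := h3 (φ k)
      have hle : (k : ℤ) ≤ (φ k : ℤ) := by exact_mod_cast hφmono.le_apply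
      omega
    -- Step 4 : inductive constant for the smaller family
    obtain ⟨C', hC'⟩ := IH (fun j' => e (jstar.succAbove j'))
      (he.comp _ Fin.succAbove_right_injective)
    -- Step 5 : coordinates are Cauchy, take limits
    have hwksub : ∀ k k', wk k - wk k' =
        ∑ j' : Fin n, (d k (jstar.succAbove j') - d k' (jstar.succAbove j')) •
          e (jstar.succAbove j') := by
      intro k k'
      have : wk k - wk k' = ∑ j, (d k j - d k' j) • e j := by
        rw [hwk]
        simp only []
        rw [← Finset.sum_sub_distrib]
        exact Finset.sum_congr rfl fun j _ => (sub_smul _ _ _).symm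
      rw [this, Fin.sum_univ_succAbove (fun j => (d k j - d k' j) • e j) jstar]
      rw [hdstar, hdstar]
      simp
    have hcauchy : ∀ j' : Fin n, ∃ x : K, ∀ Nb : ℤ, ∃ Mb : ℕ, ∀ k, Mb ≤ k →
        d k (jstar.succAbove j') = x ∨ Nb ≤ w.v (d k (jstar.succAbove j') - x) := by
      intro j'
      apply w.complete
      intro Nb
      refine ⟨(C' + g * Nb).toNat, ?_⟩
      intro k hk k' hk'
      rcases eq_or_ne (d k (jstar.succAbove j')) (d k' (jstar.succAbove j')) with heq | hne
      · exact Or.inl heq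
      · right
        have hδ : d k (jstar.succAbove j') - d k' (jstar.succAbove j') ≠ 0 :=
          sub_ne_zero_of_ne hne
        have hwne : wk k - wk k' ≠ 0 := by
          intro h
          rw [hwksub] at h
          have := Fintype.linearIndependent_iff.mp
            (he.comp _ (Fin.succAbove_right_injective (p := jstar))) _ h j'
          exact hδ this
        have hb1 : min (N (wk k)) (N (wk k')) ≤ N (wk k - wk k') := by
          have := hadd (wk k) (-(wk k')) (hwk0 k) (neg_ne_zero.mpr (hwk0 k'))
            (by rw [← sub_eq_add_neg]; exact hwne)
          rw [hneg, ← sub_eq_add_neg] at this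
          exact this
        have hb2 : N (wk k - wk k') ≤ C' + g * w.v (d k (jstar.succAbove j') - d k' (jstar.succAbove j')) := by
          rw [hwksub]
          exact hC' _ j' hδ
        have hk1 := hwkN k
        have hk2 := hwkN k'
        have hkk : (C' + g * Nb : ℤ) ≤ min (N (wk k)) (N (wk k')) := by
          have t1 : (C' + g * Nb : ℤ) ≤ (k : ℤ) := le_trans (Int.self_le_toNat _) (by exact_mod_cast hk)
          have t2 : (C' + g * Nb : ℤ) ≤ (k' : ℤ) := le_trans (Int.self_le_toNat _) (by exact_mod_cast hk')
          omega
        have : g * Nb ≤ g * w.v (d k (jstar.succAbove j') - d k' (jstar.succAbove j')) := by omega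
        exact le_of_mul_le_mul_left this hg
    choose lim hlim using hcauchy
    -- Step 6 : the limit vector
    set y : V := e jstar + ∑ j' : Fin n, lim j' • e (jstar.succAbove j') with hy
    have hy0 : y ≠ 0 := by
      intro h
      classical
      set Cf : Fin (n+1) → K := jstar.insertNth 1 lim with hCf
      have hsum : ∑ j, Cf j • e j = y := by
        rw [Fin.sum_univ_succAbove (fun j => Cf j • e j) jstar]
        rw [hy]
        congr 1
        · rw [hCf, Fin.insertNth_apply_same, one_smul]
        · exact Finset.sum_congr rfl fun j' _ => by rw [hCf, Fin.insertNth_apply_succAbove]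
      have := Fintype.linearIndependent_iff.mp he Cf (by rw [hsum, h]) jstar
      rw [hCf, Fin.insertNth_apply_same] at this
      exact one_ne_zero this
    have hysub : ∀ k, y - wk k =
        ∑ j' : Fin n, (lim j' - d k (jstar.succAbove j')) • e (jstar.succAbove j') := by
      intro k
      have hwkeq : wk k = e jstar + ∑ j' : Fin n, d k (jstar.succAbove j') • e (jstar.succAbove j') := by
        rw [hwk]
        simp only []
        rw [Fin.sum_univ_succAbove (fun j => d k j • e j) jstar, hdstar, one_smul]
      rw [hy, hwkeq, add_sub_add_left_eq_sub, ← Finset.sum_sub_distrib]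
      exact Finset.sum_congr rfl fun j' _ => (sub_smul _ _ _).symm
    have hconv : ∀ B : ℤ, ∃ Mk : ℕ, ∀ k, Mk ≤ k → y - wk k = 0 ∨ B ≤ N (y - wk k) := by
      intro B
      classical
      have hjb : ∀ j' : Fin n, ∃ Mb : ℕ, ∀ k, Mb ≤ k →
          (lim j' - d k (jstar.succAbove j')) • e (jstar.succAbove j') = 0 ∨
          B ≤ N ((lim j' - d k (jstar.succAbove j')) • e (jstar.succAbove j')) := by
        intro j'
        obtain ⟨Mb, hMb⟩ := hlim j' (max 0 (B - N (e (jstar.succAbove j'))))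
        refine ⟨Mb, fun k hk => ?_⟩
        rcases eq_or_ne (lim j' - d k (jstar.succAbove j')) 0 with hδ0 | hδ
        · left; rw [hδ0, zero_smul]
        · have hv : max 0 (B - N (e (jstar.succAbove j'))) ≤
              w.v (d k (jstar.succAbove j') - lim j') :=
            (hMb k hk).resolve_left (fun h => hδ (by rw [h, sub_self]))
          right
          rw [w.v_sub_comm] at hv
          rw [hsmul _ _ hδ (he0 _)]
          have hv0 : 0 ≤ w.v (lim j' - d k (jstar.succAbove j')) :=
            le_trans (le_max_left _ _) hv
          have hv1 : B - N (e (jstar.succAbove j')) ≤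
              w.v (lim j' - d k (jstar.succAbove j')) :=
            le_trans (le_max_right _ _) hv
          nlinarith
      choose Mbs hMbs using hjb
      refine ⟨Finset.univ.sup Mbs, fun k hk => ?_⟩
      rw [hysub]
      exact nsum_min N hadd _ _ B fun j' _ =>
        hMbs j' k (le_trans (Finset.le_sup (Finset.mem_univ j')) hk)
    -- Step 7 : contradiction
    obtain ⟨Mk, hMk⟩ := hconv (N y + 1)
    set k := Mk + (N y).toNat + 1 with hkdef
    have hky : (N y) + 1 ≤ (k : ℤ) := by
      have := Int.self_le_toNat (N y)
      push_cast [hkdef]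
      omega
    have hwkNk := hwkN k
    rcases eq_or_ne (y - wk k) 0 with h0 | hne
    · have hyeq : y = wk k := sub_eq_zero.mp h0
      rw [← hyeq] at hwkNk
      omega
    · have hB := (hMk k (by omega)).resolve_left hne
      have := hadd (y - wk k) (wk k) hne (hwk0 k) (by rw [sub_add_cancel]; exact hy0)
      rw [sub_add_cancel] at this
      omega

/-- linear independence of families whose scalar multiples have pairwise
distinct values -/
theorem li_of_val
    (hadd : ∀ x y : V, x ≠ 0 → y ≠ 0 → x + y ≠ 0 → min (N x) (N y) ≤ N (x + y))
    (hneg : ∀ x : V, N (-x) = N x)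
    {ι : Type} [Fintype ι] (f : ι → V) (h0 : ∀ i, f i ≠ 0)
    (hdist : ∀ (c c' : K) (i j : ι), c ≠ 0 → c' ≠ 0 → i ≠ j →
      N (c • f i) ≠ N (c' • f j)) :
    LinearIndependent K f := by
  classical
  rw [Fintype.linearIndependent_iff]
  intro c hsum i
  by_contra hci
  set s : Finset ι := Finset.univ.filter (fun j => c j ≠ 0) with hs
  have hsne : s.Nonempty := ⟨i, by simp [hs, hci]⟩
  have h0' : ∀ j ∈ s, c j • f j ≠ 0 := by
    intro j hj
    have : c j ≠ 0 := (Finset.mem_filter.mp hj).2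
    exact smul_ne_zero this (h0 j)
  have hd : ∀ i' ∈ s, ∀ j' ∈ s, i' ≠ j' → N (c i' • f i') ≠ N (c j' • f j') := by
    intro i' hi' j' hj' hij
    exact hdist (c i') (c j') i' j' (Finset.mem_filter.mp hi').2
      (Finset.mem_filter.mp hj').2 hij
  obtain ⟨hne, _⟩ := nsum_strict N hadd hneg s (fun j => c j • f j) hsne h0' hd
  apply hne
  rw [← hsum]
  refine Finset.sum_subset (Finset.filter_subset _ _) ?_
  intro j _ hj
  have : c j = 0 := by
    by_contra hcj
    exact hj (by simp [hs, hcj])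
  simp [this]

/-- comparison of signs for two valuations on a finite extension of a
complete field -/
theorem val_pos_of_pos {L : Type} [Field L] [Algebra K L] [FiniteDimensional K L]
    (N1 N2 : L → ℤ) (g1 g2 : ℤ) (hg1 : 0 < g1) (hg2 : 0 < g2)
    (h1add : ∀ x y : L, x ≠ 0 → y ≠ 0 → x + y ≠ 0 → min (N1 x) (N1 y) ≤ N1 (x + y))
    (h1neg : ∀ x : L, N1 (-x) = N1 x)
    (h1smul : ∀ (c : K) (x : L), c ≠ 0 → x ≠ 0 → N1 (c • x) = g1 * w.v c + N1 x)
    (h1mul : ∀ x y : L, x ≠ 0 → y ≠ 0 → N1 (x * y) = N1 x + N1 y)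
    (h2add : ∀ x y : L, x ≠ 0 → y ≠ 0 → x + y ≠ 0 → min (N2 x) (N2 y) ≤ N2 (x + y))
    (h2smul : ∀ (c : K) (x : L), c ≠ 0 → x ≠ 0 → N2 (c • x) = g2 * w.v c + N2 x)
    (h2mul : ∀ x y : L, x ≠ 0 → y ≠ 0 → N2 (x * y) = N2 x + N2 y)
    (y : L) (hy : y ≠ 0) (hpos : 0 < N1 y) : 0 < N2 y := by
  classical
  set nn := Module.finrank K L with hnn
  set e : Module.Basis (Fin nn) K L := Module.finBasis K L with he
  have hnn0 : 0 < nn := Module.finrank_pos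
  obtain ⟨C1, hC1⟩ := norm_equiv w N1 h1add h1neg g1 hg1 h1smul nn e e.linearIndependent
  haveI : Nonempty (Fin nn) := ⟨⟨0, hnn0⟩⟩
  set W0 : ℤ := Finset.univ.inf' (Finset.univ_nonempty) (fun j => N2 (e j)) with hW0
  set T : ℤ := max 1 (1 - W0) with hT
  have hT1 : 1 ≤ T := le_max_left _ _
  set m : ℕ := (C1 + g1 * T).toNat + 1 with hm
  have hmC : C1 + g1 * T ≤ (m : ℤ) := by
    have := Int.self_le_toNat (C1 + g1 * T)
    push_cast [hm]
    omega
  have hym : y ^ m ≠ 0 := pow_ne_zero _ hy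
  have hNN1 : ∀ (NN : L → ℤ), (∀ x y : L, x ≠ 0 → y ≠ 0 → NN (x * y) = NN x + NN y) →
      NN 1 = 0 := by
    intro NN hmul
    have h11 : NN (1 * 1 : L) = NN 1 + NN 1 := hmul 1 1 one_ne_zero one_ne_zero
    rw [one_mul] at h11
    omega
  have hpow1 : ∀ (NN : L → ℤ), (∀ x y : L, x ≠ 0 → y ≠ 0 → NN (x * y) = NN x + NN y) →
      ∀ (k : ℕ), NN (y ^ k) = k * NN y := by
    intro NN hmul k
    induction k with
    | zero => simpa using hNN1 NN hmul
    | succ k ih =>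
        rw [pow_succ, hmul _ _ (pow_ne_zero _ hy) hy, ih]
        push_cast
        ring
  have hsum : y ^ m = ∑ j, e.repr (y ^ m) j • e j := (e.sum_repr (y ^ m)).symm
  have hcoord : ∀ j, e.repr (y ^ m) j ≠ 0 → T ≤ w.v (e.repr (y ^ m) j) := by
    intro j hj
    have hb := hC1 (⇑(e.repr (y ^ m))) j hj
    rw [← hsum] at hb
    have hN1m : (m : ℤ) * N1 y ≤ N1 (y ^ m) := by
      rw [hpow1 N1 h1mul m]
    have h1 : (m : ℤ) ≤ (m : ℤ) * N1 y := by nlinarith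
    have : C1 + g1 * T ≤ C1 + g1 * w.v (e.repr (y ^ m) j) := by omega
    have := le_of_add_le_add_left this
    exact le_of_mul_le_mul_left this hg1
  have hterm : ∀ j : Fin nn, (e.repr (y ^ m) j • e j = 0) ∨
      (1 : ℤ) ≤ N2 (e.repr (y ^ m) j • e j) := by
    intro j
    rcases eq_or_ne (e.repr (y ^ m) j) 0 with h | h
    · left; simp [h]
    · right
      rw [h2smul _ _ h (e.ne_zero j)]
      have h1 := hcoord j h
      have h2 : W0 ≤ N2 (e j) := Finset.inf'_le _ (Finset.mem_univ j)
      have h3 : g2 * T ≥ T := by nlinarith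
      have h4 : T ≥ 1 - W0 := le_max_right _ _
      have : g2 * T ≤ g2 * w.v (e.repr (y ^ m) j) := by nlinarith
      omega
  have hN2m : (1 : ℤ) ≤ N2 (y ^ m) := by
    have := nsum_min N2 h2add Finset.univ (fun j => e.repr (y ^ m) j • e j) 1
      (fun j _ => hterm j)
    rw [← hsum] at this
    exact this.resolve_left hym
  rw [hpow1 N2 h2mul m] at hN2m
  by_contra hcon
  push_neg at hcon
  nlinarith

end Norm

end LocalFieldStruct

/-- `x` is a normal basis generator of `L` over `K`: the Galois conjugates of
`x` form a `K`-basis of `L`. -/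
def IsNormalElement (K : Type) [Field K] {L : Type} [Field L] [Algebra K L]
    (x : L) : Prop :=
  LinearIndependent K (fun σ : L ≃ₐ[K] L => σ x) ∧
    Submodule.span K (Set.range fun σ : L ≃ₐ[K] L => σ x) = ⊤

/-- The valuation criterion `VC(L/K)`, for an extension with ramification
index `e` and different of valuation `d`: every nonzero `x ∈ L` with
`v_L(x) ≡ -d-1 (mod e)` is a normal basis generator of `L` over `K`. -/
def VC (K : Type) [Field K] {L : Type} [Field L] [Algebra K L]
    (wL : LocalFieldStruct L) (e : ℕ) (d : ℤ) : Prop :=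
  ∀ x : L, x ≠ 0 → Int.ModEq (e : ℤ) (wL.v x) (-d - 1) → IsNormalElement K x

set_option maxHeartbeats 4000000 in
open LocalFieldStruct in
/-- **Lemma (tame base change).** Let `L/K` be a totally ramified Galois
extension of local fields whose degree is a power of the residue
characteristic `p > 0`.  For every finite tamely ramified extension `Kt/K`
(tame: `p ∤ e_{Kt/K}`, equivalently `d_{Kt/K} = e_{Kt/K} - 1`, with separable
residue extension), with `M = Kt·L` the compositum,
`VC(Kt·L/Kt)` implies `VC(L/K)`. -/
theorem statement7 {K Kt L M : Type} [Field K] [Field Kt] [Field L] [Field M]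
    [Algebra K Kt] [Algebra K L] [Algebra Kt M] [Algebra L M] [Algebra K M]
    [IsScalarTower K Kt M] [IsScalarTower K L M]
    (wK : LocalFieldStruct K) (wKt : LocalFieldStruct Kt)
    (wL : LocalFieldStruct L) (wM : LocalFieldStruct M)
    (p : ℕ) (hp : wK.ResidueCharP p)
    -- `L/K` is a totally ramified Galois extension of degree a power of `p`:
    [FiniteDimensional K L] [IsGalois K L]
    (eLK : ℕ) (heLK : IsRamificationIndex wK wL eLK)
    (htot : eLK = Module.finrank K L)
    (hdeg : ∃ k : ℕ, Module.finrank K L = p ^ k)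
    (dLK : ℤ) (hdLK : IsDifferentVal wK wL dLK)
    -- `Kt/K` is a finite tamely ramified extension:
    [FiniteDimensional K Kt] [Algebra.IsSeparable K Kt]
    (eKtK : ℕ) (heKtK : IsRamificationIndex wK wKt eKtK)
    (dKtK : ℤ) (hdKtK : IsDifferentVal wK wKt dKtK)
    (htame : ¬ (p ∣ eKtK) ∧ dKtK = (eKtK : ℤ) - 1)
    -- `M = Kt·L` is the compositum of `Kt` and `L`:
    (hM : IntermediateField.adjoin Kt (Set.range (algebraMap L M)) = ⊤)
    [FiniteDimensional Kt M] [IsGalois Kt M]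
    (eMKt : ℕ) (heMKt : IsRamificationIndex wKt wM eMKt)
    (dMKt : ℤ) (hdMKt : IsDifferentVal wKt wM dMKt)
    (h : VC Kt wM eMKt dMKt) :
    VC K wL eLK dLK := by
  classical
  intro x hx hxcong
  obtain ⟨haN, hramL⟩ := heLK
  obtain ⟨hbN, hramKt⟩ := heKtK
  obtain ⟨hEN, hramM⟩ := heMKt
  have hfinL : Module.finrank K L = eLK := htot.symm
  have hA0 : (0:ℤ) < (eLK:ℤ) := by exact_mod_cast haN
  have hB0 : (0:ℤ) < (eKtK:ℤ) := by exact_mod_cast hbN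
  have hE0 : (0:ℤ) < (eMKt:ℤ) := by exact_mod_cast hEN
  have hcop : Nat.Coprime eLK eKtK := by
    obtain ⟨k, hk⟩ := hdeg
    rw [htot, hk]
    exact Nat.Coprime.pow_left k ((Nat.Prime.coprime_iff_not_dvd hp.1).mpr htame.1)
  -- basic nonvanishing of algebra maps
  have hι0 : ∀ y : L, y ≠ 0 → algebraMap L M y ≠ 0 := fun y hy h =>
    hy ((algebraMap L M).injective (by rw [h, map_zero]))
  have hι'0 : ∀ c : Kt, c ≠ 0 → algebraMap Kt M c ≠ 0 := fun c hc h =>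
    hc ((algebraMap Kt M).injective (by rw [h, map_zero]))
  have hιKKt0 : ∀ c : K, c ≠ 0 → algebraMap K Kt c ≠ 0 := fun c hc h =>
    hc ((algebraMap K Kt).injective (by rw [h, map_zero]))
  have hιKL0 : ∀ c : K, c ≠ 0 → algebraMap K L c ≠ 0 := fun c hc h =>
    hc ((algebraMap K L).injective (by rw [h, map_zero]))
  -- the induced valuation on L
  set W : L → ℤ := fun y => wM.v (algebraMap L M y) with hWdef
  have hKM : ∀ c : K, c ≠ 0 →
      wM.v (algebraMap K M c) = ((eMKt:ℤ) * (eKtK:ℤ)) * wK.v c := by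
    intro c hc
    rw [IsScalarTower.algebraMap_apply K Kt M, hramM _ (hιKKt0 c hc), hramKt _ hc]
    ring
  have hWadd : ∀ y z : L, y ≠ 0 → z ≠ 0 → y + z ≠ 0 → min (W y) (W z) ≤ W (y + z) := by
    intro y z hy hz hyz
    have : W (y + z) = wM.v (algebraMap L M y + algebraMap L M z) := by
      rw [hWdef]; simp [map_add]
    rw [this]
    exact wM.v_add _ _ (hι0 y hy) (hι0 z hz)
      (by rw [← map_add]; exact hι0 _ hyz)
  have hWneg : ∀ y : L, W (-y) = W y := by
    intro y
    have : W (-y) = wM.v (-(algebraMap L M y)) := by rw [hWdef]; simp [map_neg]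
    rw [this, wM.v_neg]
  have hWmul : ∀ y z : L, y ≠ 0 → z ≠ 0 → W (y * z) = W y + W z := by
    intro y z hy hz
    have : W (y * z) = wM.v (algebraMap L M y * algebraMap L M z) := by
      rw [hWdef]; simp [map_mul]
    rw [this]
    exact wM.v_mul _ _ (hι0 y hy) (hι0 z hz)
  have hWsmul : ∀ (c : K) (z : L), c ≠ 0 → z ≠ 0 →
      W (c • z) = ((eMKt:ℤ) * (eKtK:ℤ)) * wK.v c + W z := by
    intro c z hc hz
    have : W (c • z) = wM.v (algebraMap K M c * algebraMap L M z) := by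
      rw [hWdef]
      simp only []
      rw [Algebra.smul_def, map_mul, ← IsScalarTower.algebraMap_apply K L M]
    rw [this, wM.v_mul _ _ (fun h => hc ((algebraMap K M).injective (by rw [h, map_zero]))) (hι0 z hz), hKM c hc]
  have hLsmul : ∀ (c : K) (z : L), c ≠ 0 → z ≠ 0 →
      wL.v (c • z) = (eLK:ℤ) * wK.v c + wL.v z := by
    intro c z hc hz
    rw [Algebra.smul_def, wL.v_mul _ _ (hιKL0 c hc) hz, hramL c hc]
  -- sign comparison in both directions
  have hsign1 : ∀ y : L, y ≠ 0 → 0 < wL.v y → 0 < W y := by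
    intro y hy hpos
    exact LocalFieldStruct.val_pos_of_pos wK (wL.v) W (eLK:ℤ) ((eMKt:ℤ)*(eKtK:ℤ))
      hA0 (mul_pos hE0 hB0) wL.v_add wL.v_neg hLsmul wL.v_mul hWadd hWsmul hWmul y hy hpos
  have hsign2 : ∀ y : L, y ≠ 0 → 0 < W y → 0 < wL.v y := by
    intro y hy hpos
    exact LocalFieldStruct.val_pos_of_pos wK W (wL.v) ((eMKt:ℤ)*(eKtK:ℤ)) (eLK:ℤ)
      (mul_pos hE0 hB0) hA0 hWadd hWneg hWsmul hWmul wL.v_add hLsmul wL.v_mul y hy hpos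
  have hWone : W 1 = 0 := by
    have := hWmul 1 1 one_ne_zero one_ne_zero
    rw [one_mul] at this; omega
  have hWinv : ∀ y : L, y ≠ 0 → W y⁻¹ = - W y := by
    intro y hy
    have := hWmul y y⁻¹ hy (inv_ne_zero hy)
    rw [mul_inv_cancel₀ hy, hWone] at this; omega
  have hzeroW : ∀ y : L, y ≠ 0 → wL.v y = 0 → W y = 0 := by
    intro y hy hv
    rcases lt_trichotomy (W y) 0 with hlt | heq | hgt
    · have h1 : 0 < W y⁻¹ := by rw [hWinv y hy]; omega
      have h2 := hsign2 y⁻¹ (inv_ne_zero hy) h1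
      rw [wL.v_inv y hy] at h2; omega
    · exact heq
    · have := hsign2 y hy hgt; omega
  have hWpow : ∀ (y : L), y ≠ 0 → ∀ k : ℕ, W (y ^ k) = k * W y := by
    intro y hy k
    induction k with
    | zero => simpa using hWone
    | succ k ih =>
        rw [pow_succ, hWmul _ _ (pow_ne_zero _ hy) hy, ih]; push_cast; ring
  have hprop : ∀ y : L, y ≠ 0 →
      (eLK:ℤ) * W y = ((eMKt:ℤ) * (eKtK:ℤ)) * wL.v y := by
    intro y hy
    obtain ⟨u, hu0, huv⟩ := wK.v_surj (- wL.v y)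
    set z : L := u • (y ^ eLK) with hz
    have hyp : y ^ eLK ≠ 0 := pow_ne_zero _ hy
    have hz0 : z ≠ 0 := smul_ne_zero hu0 hyp
    have hzv : wL.v z = 0 := by
      rw [hz, hLsmul u _ hu0 hyp, huv, wL.v_pow y hy]
      ring
    have hzW : W z = 0 := hzeroW z hz0 hzv
    rw [hz, hWsmul u _ hu0 hyp, huv, hWpow y hy] at hzW
    nlinarith [hzW]

  -- divisibility  eLK ∣ eMKt
  have hdvdE : eLK ∣ eMKt := by
    obtain ⟨y1, hy10, hy1v⟩ := wL.v_surj 1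
    have := hprop y1 hy10
    rw [hy1v, mul_one] at this
    have hdvdZ : (eLK:ℤ) ∣ ((eMKt * eKtK : ℕ) : ℤ) := ⟨W y1, by push_cast; linear_combination -this⟩
    have hdvdN : eLK ∣ eMKt * eKtK := Int.ofNat_dvd.mp hdvdZ
    exact (Nat.Coprime.dvd_of_dvd_mul_right hcop hdvdN)
  -- the elements y_j of valuation j
  have hyje : ∀ j : Fin eLK, ∃ y : L, y ≠ 0 ∧ wL.v y = (j:ℤ) := by
    intro j
    obtain ⟨y, h1, h2⟩ := wL.v_surj (j:ℤ)
    exact ⟨y, h1, h2⟩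
  choose yj hyj0 hyjv using hyje
  haveI hNEfin : Nonempty (Fin eLK) := ⟨⟨0, haN⟩⟩
  -- K-linear independence of the y_j
  have liL : LinearIndependent K yj := by
    apply LocalFieldStruct.li_of_val (wL.v) wL.v_add wL.v_neg yj hyj0
    intro c c' i j hc hc' hij heq
    rw [hLsmul c _ hc (hyj0 i), hLsmul c' _ hc' (hyj0 j), hyjv, hyjv] at heq
    have hdvd : (eLK:ℤ) ∣ ((j:ℤ) - (i:ℤ)) := ⟨wK.v c - wK.v c', by linear_combination -heq⟩
    have hlt : |(j:ℤ) - (i:ℤ)| < (eLK:ℤ) := by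
      have h1 : (i:ℤ) < (eLK:ℤ) := by exact_mod_cast i.2
      have h2 : (j:ℤ) < (eLK:ℤ) := by exact_mod_cast j.2
      have h3 : 0 ≤ (i:ℤ) := by positivity
      have h4 : 0 ≤ (j:ℤ) := by positivity
      rw [abs_lt]; omega
    have := Int.eq_zero_of_abs_lt_dvd hdvd hlt
    exact hij (Fin.ext (by omega))
  set BL : Module.Basis (Fin eLK) K L :=
    basisOfLinearIndependentOfCardEqFinrank liL (by rw [Fintype.card_fin, hfinL]) with hBLdef
  have hBL : ∀ j, BL j = yj j := fun j => by
    rw [hBLdef, coe_basisOfLinearIndependentOfCardEqFinrank]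
  -- spanning of M over Kt by the image of L
  have hspan0 : Submodule.span Kt (Set.range (algebraMap L M)) = ⊤ := by
    have halg : ∀ z ∈ Set.range (algebraMap L M), IsAlgebraic Kt z := fun z _ =>
      Algebra.IsAlgebraic.isAlgebraic z
    have h1 : (IntermediateField.adjoin Kt (Set.range (algebraMap L M))).toSubalgebra
        = Algebra.adjoin Kt (Set.range (algebraMap L M)) :=
      IntermediateField.adjoin_toSubalgebra_of_isAlgebraic halg
    rw [hM] at h1
    have h2 : Algebra.adjoin Kt (Set.range (algebraMap L M)) = ⊤ := by
      rw [← h1, IntermediateField.top_toSubalgebra]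
    have h3 := Algebra.adjoin_eq_span Kt (Set.range (algebraMap L M))
    rw [h2] at h3
    have h4 : (Submonoid.closure (Set.range (algebraMap L M)) : Set M)
        = Set.range (algebraMap L M) := by
      apply Set.Subset.antisymm
      · intro z hz
        have hle : Submonoid.closure (Set.range (algebraMap L M)) ≤
            MonoidHom.mrange (algebraMap L M : L →* M) := by
          rw [Submonoid.closure_le]
          intro u hu
          obtain ⟨y, rfl⟩ := hu
          exact ⟨y, rfl⟩
        obtain ⟨y, hy⟩ := hle hz
        exact ⟨y, hy⟩
      · exact Submonoid.subset_closure
    rw [h4] at h3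
    have := congrArg (Subalgebra.toSubmodule) (rfl : (⊤ : Subalgebra Kt M) = ⊤)
    rw [← h3]
    rfl
  have hspanYJ : ⊤ ≤ Submodule.span Kt (Set.range (fun j => algebraMap L M (yj j))) := by
    rw [← hspan0]
    apply Submodule.span_le.mpr
    rintro _ ⟨y, rfl⟩
    have hy := BL.sum_repr y
    rw [← hy, map_sum]
    apply Submodule.sum_mem
    intro k _
    have : algebraMap L M (BL.repr y k • BL k)
        = algebraMap K Kt (BL.repr y k) • algebraMap L M (yj k) := by
      rw [hBL k, Algebra.smul_def, map_mul, ← IsScalarTower.algebraMap_apply K L M,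
        IsScalarTower.algebraMap_apply K Kt M, ← Algebra.smul_def]
    rw [this]
    exact Submodule.smul_mem _ _ (Submodule.subset_span ⟨k, rfl⟩)
  -- Kt-independence of the images
  have hsm : ∀ (cc : Kt) (z : L), cc ≠ 0 → z ≠ 0 →
      wM.v (cc • algebraMap L M z) = (eMKt:ℤ) * wKt.v cc + W z := by
    intro cc z hcc hz
    rw [Algebra.smul_def, wM.v_mul _ _ (hι'0 cc hcc) (hι0 z hz), hramM _ hcc]
  have hcopZ : IsCoprime (eLK:ℤ) (eKtK:ℤ) := by
    rw [Int.isCoprime_iff_gcd_eq_one]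
    exact_mod_cast hcop
  have liM : LinearIndependent Kt (fun j => algebraMap L M (yj j)) := by
    apply LocalFieldStruct.li_of_val (wM.v) wM.v_add wM.v_neg _
      (fun j => hι0 _ (hyj0 j))
    intro c c' i j hc hc' hij heq
    rw [hsm _ _ hc (hyj0 i), hsm _ _ hc' (hyj0 j)] at heq
    have h1 := hprop _ (hyj0 i)
    have h2 := hprop _ (hyj0 j)
    rw [hyjv] at h1
    rw [hyjv] at h2
    have hkey : (eLK:ℤ) * wKt.v c + (eKtK:ℤ) * (i:ℤ)
        = (eLK:ℤ) * wKt.v c' + (eKtK:ℤ) * (j:ℤ) := by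
      apply mul_left_cancel₀ (ne_of_gt hE0)
      linear_combination (eLK:ℤ) * heq - h1 + h2
    have hdvd : (eLK:ℤ) ∣ (eKtK:ℤ) * ((j:ℤ) - (i:ℤ)) :=
      ⟨wKt.v c - wKt.v c', by linear_combination -hkey⟩
    have hdvd2 : (eLK:ℤ) ∣ ((j:ℤ) - (i:ℤ)) := hcopZ.dvd_of_dvd_mul_left hdvd
    have hlt : |(j:ℤ) - (i:ℤ)| < (eLK:ℤ) := by
      have hh1 : (i:ℤ) < (eLK:ℤ) := by exact_mod_cast i.2
      have hh2 : (j:ℤ) < (eLK:ℤ) := by exact_mod_cast j.2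
      have hh3 : 0 ≤ (i:ℤ) := by positivity
      have hh4 : 0 ≤ (j:ℤ) := by positivity
      rw [abs_lt]; omega
    have := Int.eq_zero_of_abs_lt_dvd hdvd2 hlt
    exact hij (Fin.ext (by omega))
  set BM : Module.Basis (Fin eLK) Kt M := Module.Basis.mk liM hspanYJ with hBMdef
  have hBM : ∀ j, BM j = algebraMap L M (yj j) := fun j => by
    rw [hBMdef, Module.Basis.mk_apply]
  have hfinM : Module.finrank Kt M = eLK := by
    rw [Module.finrank_eq_card_basis BM, Fintype.card_fin]
  -- eMKt = eLK
  obtain ⟨piM, hpi0, hpiv⟩ := wM.v_surj 1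
  have liP : LinearIndependent Kt (fun i : Fin eMKt => piM ^ (i:ℕ)) := by
    apply LocalFieldStruct.li_of_val (wM.v) wM.v_add wM.v_neg _
      (fun i => pow_ne_zero _ hpi0)
    intro c c' i j hc hc' hij heq
    have hval : ∀ (cc : Kt) (i : Fin eMKt), cc ≠ 0 →
        wM.v (cc • piM ^ (i:ℕ)) = (eMKt:ℤ) * wKt.v cc + (i:ℤ) := by
      intro cc i hcc
      rw [Algebra.smul_def, wM.v_mul _ _ (hι'0 cc hcc) (pow_ne_zero _ hpi0),
        hramM _ hcc, wM.v_pow _ hpi0, hpiv]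
      ring
    rw [hval c i hc, hval c' j hc'] at heq
    have hdvd : (eMKt:ℤ) ∣ ((j:ℤ) - (i:ℤ)) := ⟨wKt.v c - wKt.v c', by linear_combination -heq⟩
    have hlt : |(j:ℤ) - (i:ℤ)| < (eMKt:ℤ) := by
      have hh1 : (i:ℤ) < (eMKt:ℤ) := by exact_mod_cast i.2
      have hh2 : (j:ℤ) < (eMKt:ℤ) := by exact_mod_cast j.2
      have hh3 : 0 ≤ (i:ℤ) := by positivity
      have hh4 : 0 ≤ (j:ℤ) := by positivity
      rw [abs_lt]; omega
    have := Int.eq_zero_of_abs_lt_dvd hdvd hlt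
    exact hij (Fin.ext (by omega))
  have hEa : eMKt = eLK := by
    have hle : eMKt ≤ eLK := by
      have := liP.fintype_card_le_finrank
      rw [Fintype.card_fin, hfinM] at this
      exact this
    exact le_antisymm hle (Nat.le_of_dvd hEN hdvdE)
  have hWb : ∀ y : L, y ≠ 0 → W y = (eKtK:ℤ) * wL.v y := by
    intro y hy
    have := hprop y hy
    rw [hEa] at this
    have h2 : (eLK:ℤ) * W y = (eLK:ℤ) * ((eKtK:ℤ) * wL.v y) := by linarith [this]
    exact mul_left_cancel₀ (ne_of_gt hA0) h2

  -- trace compatibility : Tr_{M/Kt} (ι y) = algebraMap K Kt (Tr_{L/K} y)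
  have hT : ∀ y : L, Algebra.trace Kt M (algebraMap L M y)
      = algebraMap K Kt (Algebra.trace K L y) := by
    intro y
    rw [Algebra.trace_eq_matrix_trace BM (algebraMap L M y),
      Algebra.trace_eq_matrix_trace BL y]
    rw [Matrix.trace, Matrix.trace, map_sum]
    apply Finset.sum_congr rfl
    intro i _
    rw [Matrix.diag_apply, Matrix.diag_apply,
      Algebra.leftMulMatrix_eq_repr_mul, Algebra.leftMulMatrix_eq_repr_mul]
    have hmul : algebraMap L M y * BM i
        = ∑ k, (algebraMap K Kt ((BL.repr (y * BL i)) k)) • BM k := by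
      rw [hBM i, ← map_mul]
      have : y * yj i = y * BL i := by rw [hBL]
      rw [this]
      conv_lhs => rw [← BL.sum_repr (y * BL i)]
      rw [map_sum]
      apply Finset.sum_congr rfl
      intro k _
      rw [hBL k, hBM k, Algebra.smul_def, map_mul,
        ← IsScalarTower.algebraMap_apply K L M,
        IsScalarTower.algebraMap_apply K Kt M, ← Algebra.smul_def]
    rw [hmul]
    exact congrFun (BM.repr_sum_self _) i
  -- integrality of traces from L
  have hTrInt : ∀ y : L, (y ≠ 0 → -dLK ≤ wL.v y) →
      wK.Integral (Algebra.trace K L y) := (hdLK (-dLK)).mpr le_rfl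
  -- a sharp witness for the different of L/K
  have hwit : ∃ ys : L, ys ≠ 0 ∧ wL.v ys = -dLK - 1 ∧
      Algebra.trace K L ys ≠ 0 ∧ wK.v (Algebra.trace K L ys) < 0 := by
    have h1 : ¬ (-dLK ≤ -dLK - 1) := by omega
    have h3 : ¬ ∀ y : L, (y ≠ 0 → -dLK - 1 ≤ wL.v y) →
        wK.Integral (Algebra.trace K L y) := fun hc => h1 ((hdLK (-dLK - 1)).mp hc)
    push_neg at h3
    obtain ⟨y, hy1, hy2⟩ := h3
    have hy2' : ¬ (Algebra.trace K L y = 0 ∨ 0 ≤ wK.v (Algebra.trace K L y)) := hy2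
    push_neg at hy2'
    obtain ⟨hT0, hTv⟩ := hy2'
    have hy0 : y ≠ 0 := by
      rintro rfl
      exact hT0 (map_zero _)
    refine ⟨y, hy0, ?_, hT0, hTv⟩
    have hge := hy1 hy0
    by_contra hne
    have hge' : -dLK ≤ wL.v y := by omega
    have hint := hTrInt y (fun _ => hge')
    have hint' : Algebra.trace K L y = 0 ∨ 0 ≤ wK.v (Algebra.trace K L y) := hint
    rcases hint' with hc | hc
    · exact hT0 hc
    · omega
  -- scaled integrality bounds
  have hTj : ∀ (y : L), y ≠ 0 → ∀ s : ℤ, (eLK:ℤ) * s ≤ wL.v y + dLK →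
      (Algebra.trace K L y = 0 ∨ s ≤ wK.v (Algebra.trace K L y)) := by
    intro y hy s hs
    obtain ⟨u, hu0, huv⟩ := wK.v_surj (-s)
    have h1 : wL.v (u • y) = (eLK:ℤ) * (-s) + wL.v y := by
      rw [hLsmul u y hu0 hy, huv]
    have h2 := hTrInt (u • y) (fun _ => by
      rw [h1]
      have : (eLK:ℤ) * (-s) = -((eLK:ℤ) * s) := by ring
      omega)
    have h2' : Algebra.trace K L (u • y) = 0 ∨
        0 ≤ wK.v (Algebra.trace K L (u • y)) := h2
    have htrs : Algebra.trace K L (u • y) = u * Algebra.trace K L y := by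
      rw [map_smul, smul_eq_mul]
    rw [htrs] at h2'
    rcases h2' with hc | hc
    · rcases mul_eq_zero.mp hc with hc' | hc'
      · exact absurd hc' hu0
      · exact Or.inl hc'
    · rcases eq_or_ne (Algebra.trace K L y) 0 with h0 | h0
      · exact Or.inl h0
      · right
        rw [wK.v_mul u _ hu0 h0, huv] at hc
        omega
  -- the exact value of d_{M/Kt}
  set i0 : ℤ := ((eLK:ℤ) - 1) * ((eKtK:ℤ) - 1) - (eKtK:ℤ) * dLK with hi0
  have hLHS : ∀ z : M, (z ≠ 0 → i0 ≤ wM.v z) → wKt.Integral (Algebra.trace Kt M z) := by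
    intro z hz
    rcases eq_or_ne z 0 with rfl | hz0
    · exact Or.inl (map_zero _)
    · set c : Fin eLK → Kt := ⇑(BM.repr z) with hc
      set s : Finset (Fin eLK) := Finset.univ.filter (fun j => c j ≠ 0) with hs
      have hrep : ∑ j, c j • BM j = z := BM.sum_repr z
      have hsne : s.Nonempty := by
        by_contra hemp
        apply hz0
        rw [← hrep]
        apply Finset.sum_eq_zero
        intro j _
        have hcj : c j = 0 := by
          by_contra hcj
          exact hemp ⟨j, by simp [hs, hcj]⟩
        simp [hcj]
      have hzsum : z = ∑ j ∈ s, c j • BM j := by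
        rw [← hrep]
        symm
        refine Finset.sum_subset (Finset.filter_subset _ _) ?_
        intro j _ hj
        have hcj : c j = 0 := by
          by_contra hcj
          exact hj (by simp [hs, hcj])
        simp [hcj]
      have hterms0 : ∀ j ∈ s, c j • BM j ≠ 0 := by
        intro j hj
        have hcj : c j ≠ 0 := (Finset.mem_filter.mp hj).2
        rw [hBM j]
        exact smul_ne_zero hcj (hι0 _ (hyj0 j))
      have hvals : ∀ j, c j ≠ 0 →
          wM.v (c j • BM j) = (eLK:ℤ) * wKt.v (c j) + (eKtK:ℤ) * (j:ℤ) := by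
        intro j hcj
        rw [hBM j, hsm _ _ hcj (hyj0 j), hWb _ (hyj0 j), hyjv, hEa]
      have hdist : ∀ i ∈ s, ∀ j ∈ s, i ≠ j →
          wM.v (c i • BM i) ≠ wM.v (c j • BM j) := by
        intro i hi j hj hij heq
        rw [hvals i (Finset.mem_filter.mp hi).2, hvals j (Finset.mem_filter.mp hj).2] at heq
        have hdvd : (eLK:ℤ) ∣ (eKtK:ℤ) * ((j:ℤ) - (i:ℤ)) :=
          ⟨wKt.v (c i) - wKt.v (c j), by linear_combination -heq⟩
        have hdvd2 : (eLK:ℤ) ∣ ((j:ℤ) - (i:ℤ)) := hcopZ.dvd_of_dvd_mul_left hdvd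
        have hlt : |(j:ℤ) - (i:ℤ)| < (eLK:ℤ) := by
          have hh1 : (i:ℤ) < (eLK:ℤ) := by exact_mod_cast i.2
          have hh2 : (j:ℤ) < (eLK:ℤ) := by exact_mod_cast j.2
          have hh3 : 0 ≤ (i:ℤ) := by positivity
          have hh4 : 0 ≤ (j:ℤ) := by positivity
          rw [abs_lt]; omega
        have := Int.eq_zero_of_abs_lt_dvd hdvd2 hlt
        exact hij (Fin.ext (by omega))
      obtain ⟨hzne, j0, hj0s, hj0val, hj0min⟩ :=
        LocalFieldStruct.nsum_strict (wM.v) wM.v_add wM.v_neg s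
          (fun j => c j • BM j) hsne hterms0 hdist
      have hjb : ∀ j ∈ s, i0 ≤ (eLK:ℤ) * wKt.v (c j) + (eKtK:ℤ) * (j:ℤ) := by
        intro j hj
        have h1 : i0 ≤ wM.v z := hz hz0
        have h2 : wM.v z = wM.v (c j0 • BM j0) := by rw [hzsum]; exact hj0val
        have h3 := hj0min j hj
        rw [← hvals j (Finset.mem_filter.mp hj).2]
        omega
      -- trace computation
      have htr : Algebra.trace Kt M z
          = ∑ j ∈ s, c j * algebraMap K Kt (Algebra.trace K L (yj j)) := by
        conv_lhs => rw [hzsum]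
        rw [map_sum]
        apply Finset.sum_congr rfl
        intro j _
        rw [map_smul, smul_eq_mul, hBM j, hT]
      rw [htr]
      have hterm : ∀ j ∈ s, (c j * algebraMap K Kt (Algebra.trace K L (yj j)) = 0) ∨
          (0:ℤ) ≤ wKt.v (c j * algebraMap K Kt (Algebra.trace K L (yj j))) := by
        intro j hj
        have hcj : c j ≠ 0 := (Finset.mem_filter.mp hj).2
        rcases eq_or_ne (Algebra.trace K L (yj j)) 0 with hTz | hTz
        · left; rw [hTz, map_zero, mul_zero]
        · right
          have hA0' : (eLK:ℤ) ≠ 0 := ne_of_gt hA0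
          set q : ℤ := ((j:ℤ) + dLK) / (eLK:ℤ) with hq
          set r : ℤ := ((j:ℤ) + dLK) % (eLK:ℤ) with hrdef
          have hqr : (eLK:ℤ) * q + r = (j:ℤ) + dLK := Int.mul_ediv_add_emod _ _
          have hr0 : 0 ≤ r := Int.emod_nonneg _ hA0'
          have hr1 : r < (eLK:ℤ) := Int.emod_lt_of_pos _ hA0
          have hTq := (hTj (yj j) (hyj0 j) q (by rw [hyjv]; linarith)).resolve_left hTz
          have hvj := hjb j hj
          rw [wKt.v_mul _ _ hcj (hιKKt0 _ hTz), hramKt _ hTz]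
          -- make the valuations opaque
          obtain ⟨vc, hvc⟩ : ∃ t : ℤ, wKt.v (c j) = t := ⟨_, rfl⟩
          obtain ⟨vT, hvT⟩ : ∃ t : ℤ, wK.v (Algebra.trace K L (yj j)) = t := ⟨_, rfl⟩
          rw [hvc, hvT]
          rw [hvc] at hvj
          rw [hvT] at hTq
          rw [hi0] at hvj
          have hBq : (eKtK:ℤ) * q ≤ (eKtK:ℤ) * vT :=
            mul_le_mul_of_nonneg_left hTq (le_of_lt hB0)
          have hkey : 0 ≤ vc + (eKtK:ℤ) * q := by
            by_contra hcon
            push_neg at hcon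
            have hle : vc + (eKtK:ℤ) * q ≤ -1 := by
              have := Int.lt_iff_add_one_le.mp hcon
              linarith
            have hmul1 : (eLK:ℤ) * (vc + (eKtK:ℤ) * q) ≤ (eLK:ℤ) * (-1) :=
              mul_le_mul_of_nonneg_left hle (le_of_lt hA0)
            have e2 : (eKtK:ℤ) * r ≤ (eKtK:ℤ) * ((eLK:ℤ) - 1) :=
              mul_le_mul_of_nonneg_left (by linarith) (le_of_lt hB0)
            nlinarith only [hvj, hqr, hmul1, e2, hA0, hB0]
          linarith
      have := LocalFieldStruct.nsum_min (wKt.v) wKt.v_add s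
        (fun j => c j * algebraMap K Kt (Algebra.trace K L (yj j))) 0 hterm
      exact this
  have hle1 : -dMKt ≤ i0 := (hdMKt i0).mp hLHS
  have hgt : ¬ (-dMKt ≤ i0 - 1) := by
    intro hcon
    have hLHS' := (hdMKt (i0 - 1)).mpr hcon
    obtain ⟨ys, hys0, hysv, hysT0, hysTv⟩ := hwit
    obtain ⟨cb, hcb0, hcbv⟩ := wKt.v_surj ((eKtK:ℤ) - 1)
    set z : M := (algebraMap Kt M cb) * algebraMap L M ys with hzdef
    have hz0 : z ≠ 0 := mul_ne_zero (hι'0 cb hcb0) (hι0 _ hys0)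
    have hzv : wM.v z = i0 - 1 := by
      rw [hzdef, wM.v_mul _ _ (hι'0 cb hcb0) (hι0 _ hys0), hramM _ hcb0, hcbv]
      have : wM.v (algebraMap L M ys) = W ys := rfl
      rw [this, hWb ys hys0, hysv, hEa, hi0]
      ring
    have hint := hLHS' z (fun _ => le_of_eq hzv.symm)
    have htrz : Algebra.trace Kt M z = cb * algebraMap K Kt (Algebra.trace K L ys) := by
      rw [hzdef, ← Algebra.smul_def, map_smul, smul_eq_mul, hT]
    have hint' : Algebra.trace Kt M z = 0 ∨ 0 ≤ wKt.v (Algebra.trace Kt M z) := hint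
    rcases hint' with h0 | hpos
    · rw [htrz] at h0
      rcases mul_eq_zero.mp h0 with hc | hc
      · exact hcb0 hc
      · exact hιKKt0 _ hysT0 hc
    · rw [htrz, wKt.v_mul _ _ hcb0 (hιKKt0 _ hysT0), hcbv, hramKt _ hysT0] at hpos
      nlinarith
  have hdval : dMKt = -i0 := by omega

  -- the congruence upstairs
  have hx' : algebraMap L M x ≠ 0 := hι0 x hx
  have hcongM : Int.ModEq (eMKt:ℤ) (wM.v (algebraMap L M x)) (-dMKt - 1) := by
    rw [hEa]
    have h1 : wM.v (algebraMap L M x) = (eKtK:ℤ) * wL.v x := hWb x hx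
    rw [h1]
    have h2 : (eKtK:ℤ) * wL.v x ≡ (eKtK:ℤ) * (-dLK - 1) [ZMOD (eLK:ℤ)] :=
      hxcong.mul_left _
    have h3 : (eKtK:ℤ) * (-dLK - 1) ≡ -dMKt - 1 [ZMOD (eLK:ℤ)] := by
      have he : -dMKt - 1 - (eKtK:ℤ) * (-dLK - 1) = (eLK:ℤ) * ((eKtK:ℤ) - 1) := by
        rw [hdval, hi0]; ring
      exact Int.modEq_iff_dvd.mpr ⟨(eKtK:ℤ) - 1, he⟩
    exact h2.trans h3
  have hnorm := h (algebraMap L M x) hx' hcongM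
  -- the restriction homomorphism on Galois groups
  set rmap : (M ≃ₐ[Kt] M) → (L ≃ₐ[K] L) :=
    fun σ => (σ.restrictScalars K).restrictNormal L with hrmapdef
  have hcomm : ∀ (σ : M ≃ₐ[Kt] M) (y : L),
      algebraMap L M (rmap σ y) = σ (algebraMap L M y) := by
    intro σ y
    exact AlgEquiv.restrictNormal_commutes (σ.restrictScalars K) L y
  have rinj : Function.Injective rmap := by
    intro σ σ' hσ
    have hagree : ∀ y : L, σ (algebraMap L M y) = σ' (algebraMap L M y) := by
      intro y
      rw [← hcomm σ y, ← hcomm σ' y, hσ]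
    have hlin : (σ : M →ₗ[Kt] M) = (σ' : M →ₗ[Kt] M) := by
      apply LinearMap.ext_on hspan0
      rintro _ ⟨y, rfl⟩
      exact hagree y
    apply AlgEquiv.ext
    intro m
    exact LinearMap.congr_fun hlin m
  have c1 : Fintype.card (M ≃ₐ[Kt] M) = eLK := by
    rw [← Nat.card_eq_fintype_card, IsGalois.card_aut_eq_finrank Kt M, hfinM]
  have c2 : Fintype.card (L ≃ₐ[K] L) = eLK := by
    rw [← Nat.card_eq_fintype_card, IsGalois.card_aut_eq_finrank K L, hfinL]
  have rbij : Function.Bijective rmap :=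
    (Fintype.bijective_iff_injective_and_card rmap).mpr ⟨rinj, by rw [c1, c2]⟩
  set σof : (L ≃ₐ[K] L) → (M ≃ₐ[Kt] M) := Function.surjInv rbij.2 with hσofdef
  have hσofeq : ∀ τ, rmap (σof τ) = τ := fun τ => Function.surjInv_eq rbij.2 τ
  have hσofinj : Function.Injective σof := by
    intro τ τ' hh
    rw [← hσofeq τ, ← hσofeq τ', hh]
  have hfam : (fun τ : L ≃ₐ[K] L => algebraMap L M (τ x))
      = (fun σ : M ≃ₐ[Kt] M => σ (algebraMap L M x)) ∘ σof := by
    funext τ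
    have hc := hcomm (σof τ) x
    rw [hσofeq τ] at hc
    exact hc.symm ▸ hc
  have liKt2 : LinearIndependent Kt (fun τ : L ≃ₐ[K] L => algebraMap L M (τ x)) := by
    rw [hfam]
    exact hnorm.1.comp σof hσofinj
  have liK2 : LinearIndependent K (fun τ : L ≃ₐ[K] L => algebraMap L M (τ x)) := by
    apply liKt2.restrict_scalars
    intro cc cc' hcc
    apply (algebraMap K Kt).injective
    simpa [Algebra.algebraMap_eq_smul_one] using hcc
  have li : LinearIndependent K (fun τ : L ≃ₐ[K] L => τ x) := by
    apply LinearIndependent.of_comp (IsScalarTower.toAlgHom K L M).toLinearMap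
    exact liK2
  haveI : Nonempty (L ≃ₐ[K] L) := ⟨AlgEquiv.refl⟩
  exact ⟨li, li.span_eq_top_of_card_eq_finrank (by rw [c2, hfinL])⟩
end

section
/- Let L/K be a totally ramified Kummer extension of local fields whose degree is a power of the residue characteristic p. Then VC(L/K) holds if and only if L is a unit root Kummer extension of K. -/
namespace VCAux

variable {F : Type} [Field F] (w : LocalFieldStruct F)

lemma v_one : w.v 1 = 0 := by
  have h := w.v_mul 1 1 one_ne_zero one_ne_zero
  rw [one_mul] at h; omega

lemma v_neg_one : w.v (-1) = 0 := by
  have h := w.v_mul (-1) (-1) (by norm_num) (by norm_num)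
  rw [neg_mul_neg, one_mul, v_one] at h; omega

lemma v_neg {x : F} (hx : x ≠ 0) : w.v (-x) = w.v x := by
  have h := w.v_mul (-1) x (by norm_num) hx
  rw [neg_one_mul, v_neg_one] at h; omega

lemma v_inv {x : F} (hx : x ≠ 0) : w.v x⁻¹ = -w.v x := by
  have h := w.v_mul x x⁻¹ hx (inv_ne_zero hx)
  rw [mul_inv_cancel₀ hx, v_one] at h; omega

lemma v_pow {x : F} (hx : x ≠ 0) (t : ℕ) : w.v (x ^ t) = t * w.v x := by
  induction t with
  | zero => simpa using v_one w
  | succ t ih =>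
      have h := w.v_mul (x ^ t) x (pow_ne_zero t hx) hx
      rw [← pow_succ] at h
      rw [h, ih]; push_cast; ring

/-- strict ultrametric equality: if `v x < v y` then `x + y ≠ 0` and `v (x+y) = v x`. -/
lemma v_add_lt {x y : F} (hx : x ≠ 0) (hy : y ≠ 0) (hlt : w.v x < w.v y) :
    x + y ≠ 0 ∧ w.v (x + y) = w.v x := by
  have hne : x + y ≠ 0 := by
    intro h
    have hyx : y = -x := eq_neg_of_add_eq_zero_right h
    rw [hyx, v_neg w hx] at hlt; omega
  refine ⟨hne, ?_⟩
  have h1 : min (w.v x) (w.v y) ≤ w.v (x + y) := w.v_add x y hx hy hne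
  rw [min_eq_left hlt.le] at h1
  have h2 : min (w.v (x + y)) (w.v (-y)) ≤ w.v ((x + y) + -y) := by
    apply w.v_add _ _ hne (neg_ne_zero.mpr hy)
    simpa using hx
  rw [add_neg_cancel_right, v_neg w hy] at h2
  rcases min_cases (w.v (x + y)) (w.v y) with ⟨h3, -⟩ | ⟨h3, h4⟩
  · omega
  · omega

/-- min version for distinct valuations -/
lemma v_add_ne {x y : F} (hx : x ≠ 0) (hy : y ≠ 0) (hne : w.v x ≠ w.v y) :
    x + y ≠ 0 ∧ w.v (x + y) = min (w.v x) (w.v y) := by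
  rcases lt_or_gt_of_ne hne with h | h
  · have := v_add_lt w hx hy h
    rw [min_eq_left h.le]; exact this
  · have := v_add_lt w hy hx h
    rw [min_eq_right h.le, add_comm]; exact this

/-- a sum of nonzero elements with pairwise distinct valuations is nonzero,
with valuation attained by one of the terms. -/
lemma v_sum_distinct {ι : Type*} (s : Finset ι) (f : ι → F) (hne : s.Nonempty)
    (h0 : ∀ i ∈ s, f i ≠ 0)
    (hd : ∀ i ∈ s, ∀ j ∈ s, i ≠ j → w.v (f i) ≠ w.v (f j)) :
    (∑ i ∈ s, f i) ≠ 0 ∧ ∃ i₀ ∈ s, w.v (∑ i ∈ s, f i) = w.v (f i₀) ∧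
      ∀ j ∈ s, w.v (f i₀) ≤ w.v (f j) := by
  classical
  induction s using Finset.cons_induction with
  | empty => exact absurd hne (by simp)
  | cons a s ha ih =>
      rw [Finset.sum_cons]
      rcases s.eq_empty_or_nonempty with rfl | hs
      · simp only [Finset.sum_empty, add_zero]
        refine ⟨h0 a (by simp), a, by simp, rfl, by simp⟩
      · obtain ⟨hs0, i₀, hi₀, hv, hmin⟩ := ih hs
          (fun i hi => h0 i (Finset.mem_cons_of_mem hi))
          (fun i hi j hj hij => hd i (Finset.mem_cons_of_mem hi) j (Finset.mem_cons_of_mem hj) hij)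
        have hai₀ : a ≠ i₀ := fun h => ha (h ▸ hi₀)
        have hda : w.v (f a) ≠ w.v (∑ i ∈ s, f i) := by
          rw [hv]
          exact hd a (Finset.mem_cons_self a s) i₀ (Finset.mem_cons_of_mem hi₀) hai₀
        have ha0 : f a ≠ 0 := h0 a (Finset.mem_cons_self a s)
        obtain ⟨hsum_ne, hsum_v⟩ := v_add_ne w ha0 hs0 hda
        refine ⟨hsum_ne, ?_⟩
        rcases min_cases (w.v (f a)) (w.v (∑ i ∈ s, f i)) with ⟨hm, hle⟩ | ⟨hm, hlt⟩
        · exact ⟨a, Finset.mem_cons_self a s, by rw [hsum_v, hm],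
            fun j hj => by
              rcases Finset.mem_cons.mp hj with rfl | hj
              · exact le_refl _
              · exact le_trans (by rw [hv] at hle; exact le_trans hle (hmin j hj)) (le_refl _)⟩
        · exact ⟨i₀, Finset.mem_cons_of_mem hi₀, by rw [hsum_v, hm, hv],
            fun j hj => by
              rcases Finset.mem_cons.mp hj with rfl | hj
              · rw [hv] at hlt; exact hlt.le
              · exact hmin j hj⟩

end VCAux

section Part2

namespace VCAux

variable {K L : Type} [Field K] [Field L] [Algebra K L]

lemma algebraMap_ne_zero {c : K} (hc : c ≠ 0) : algebraMap K L c ≠ 0 := by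
  simpa using fun h => hc ((algebraMap K L).injective (by simpa using h))

variable [FiniteDimensional K L] [IsGalois K L]

lemma trace_comp_aut (σ : L ≃ₐ[K] L) (y : L) :
    Algebra.trace K L (σ y) = Algebra.trace K L y := by
  apply (algebraMap K L).injective
  rw [trace_eq_sum_automorphisms, trace_eq_sum_automorphisms]
  calc ∑ τ : L ≃ₐ[K] L, τ (σ y) = ∑ τ : L ≃ₐ[K] L, (τ * σ) y := by
        simp [AlgEquiv.mul_apply]
    _ = ∑ τ : L ≃ₐ[K] L, τ y :=
        Fintype.sum_equiv (Equiv.mulRight σ) _ _ (fun τ => rfl)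

lemma trace_one' : Algebra.trace K L 1 = (Module.finrank K L : K) := by
  have h := Algebra.trace_algebraMap (R := K) (S := L) (1 : K)
  rw [map_one] at h
  rw [h, nsmul_eq_mul, mul_one]

lemma trace_mulK (c : K) (y : L) :
    Algebra.trace K L (algebraMap K L c * y) = c * Algebra.trace K L y := by
  rw [← Algebra.smul_def, map_smul, smul_eq_mul]

/-- if `T` is a nonzero functional whose kernel is Galois stable,
elements of the kernel are not normal. -/
lemma not_normal_of_ker (T : L →ₗ[K] K) (hTne : ∃ z, T z ≠ 0)
    (hstab : ∀ σ : L ≃ₐ[K] L, ∀ y : L, T y = 0 → T (σ y) = 0)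
    (y : L) (hy : T y = 0) : ¬ IsNormalElement K y := by
  rintro ⟨-, hspan⟩
  obtain ⟨z, hz⟩ := hTne
  have hle : Submodule.span K (Set.range fun σ : L ≃ₐ[K] L => σ y) ≤ LinearMap.ker T := by
    rw [Submodule.span_le]
    rintro - ⟨σ, rfl⟩
    exact hstab σ y hy
  rw [hspan] at hle
  exact hz (hle Submodule.mem_top)

/-- the kernel of a nonzero functional `T : L → K` misses at most one valuation
class mod `e`. -/
lemma miss_le_one (wK : LocalFieldStruct K) (wL : LocalFieldStruct L) (e : ℕ)
    (he : wK.IsRamificationIndex wL e) (T : L →ₗ[K] K) (c c' : ℤ)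
    (hc : ∀ y : L, y ≠ 0 → T y = 0 → ¬ Int.ModEq (e : ℤ) (wL.v y) c)
    (hc' : ∀ y : L, y ≠ 0 → T y = 0 → ¬ Int.ModEq (e : ℤ) (wL.v y) c') :
    Int.ModEq (e : ℤ) c c' := by
  by_contra hne
  obtain ⟨xc, hxc0, hxcv⟩ := wL.v_surj c
  obtain ⟨xc', hxc'0, hxc'v⟩ := wL.v_surj c'
  have hTc : T xc ≠ 0 := fun h => hc xc hxc0 h (by rw [hxcv])
  have hTc' : T xc' ≠ 0 := fun h => hc' xc' hxc'0 h (by rw [hxc'v])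
  set lam := T xc' / T xc with hlam
  have hlam0 : lam ≠ 0 := div_ne_zero hTc' hTc
  set z := xc' - algebraMap K L lam * xc with hz
  have hTz : T z = 0 := by
    rw [hz, map_sub, ← Algebra.smul_def, map_smul, smul_eq_mul, hlam,
      div_mul_cancel₀ _ hTc, sub_self]
  have hvlx : wL.v (algebraMap K L lam * xc) = (e : ℤ) * wK.v lam + c := by
    rw [wL.v_mul _ _ (algebraMap_ne_zero hlam0) hxc0, he.2 lam hlam0, hxcv]
  have hvne : wL.v xc' ≠ wL.v (algebraMap K L lam * xc) := by
    rw [hxc'v, hvlx]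
    intro h
    exact hne (Int.modEq_iff_dvd.mpr ⟨wK.v lam, by linarith⟩)
  have hmul_ne : algebraMap K L lam * xc ≠ 0 :=
    mul_ne_zero (algebraMap_ne_zero hlam0) hxc0
  have hneg : wL.v (-(algebraMap K L lam * xc)) = (e : ℤ) * wK.v lam + c := by
    rw [v_neg wL hmul_ne, hvlx]
  obtain ⟨hz0, hzv⟩ := v_add_ne wL hxc'0 (neg_ne_zero.mpr hmul_ne)
    (by rw [hneg, hxc'v]; rw [hxc'v, hvlx] at hvne; exact hvne)
  rw [← sub_eq_add_neg] at hz0 hzv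
  rw [hneg, hxc'v] at hzv
  rcases min_cases c' ((e : ℤ) * wK.v lam + c) with ⟨hm, -⟩ | ⟨hm, -⟩
  · exact hc' z (hz ▸ hz0) hTz (by rw [hz, hzv, hm])
  · refine hc z (hz ▸ hz0) hTz ?_
    rw [hz, hzv, hm]
    exact Int.modEq_iff_dvd.mpr ⟨-(wK.v lam), by ring⟩

end VCAux

end Part2

section Part3

namespace VCAux

set_option linter.unusedSectionVars false

variable {K L : Type} [Field K] [Field L] [Algebra K L]
variable [FiniteDimensional K L] [IsGalois K L]

/-- residue field does not grow in a totally ramified extension: any unit of `L`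
is congruent to an element of `K` modulo the maximal ideal. -/
lemma exists_residue (wK : LocalFieldStruct K) (wL : LocalFieldStruct L) (e : ℕ)
    (he : wK.IsRamificationIndex wL e) (htot : e = Module.finrank K L)
    (ρ : L) (hρ0 : ρ ≠ 0) (hρv : wL.v ρ = 0) :
    ∃ c : K, ρ = algebraMap K L c ∨
      (ρ - algebraMap K L c ≠ 0 ∧ 0 < wL.v (ρ - algebraMap K L c)) := by
  classical
  by_contra hcon
  push_neg at hcon
  -- hcon : ∀ c, ρ ≠ ↑c ∧ (ρ - ↑c ≠ 0 → wL.v (ρ - ↑c) ≤ 0)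
  have hsub : ∀ c : K, ρ - algebraMap K L c ≠ 0 ∧ wL.v (ρ - algebraMap K L c) ≤ 0 := by
    intro c
    have h1 := (hcon c).1
    have h2 := (hcon c).2
    have hne : ρ - algebraMap K L c ≠ 0 := fun h => h1 (by
      have := sub_eq_zero.mp h; exact this)
    exact ⟨hne, by have := h2 hne; omega⟩
  obtain ⟨π, hπ0, hπv⟩ := wL.v_surj 1
  set n := Module.finrank K L with hn
  have hnpos : 0 < n := Module.finrank_pos
  -- the 2n elements π^i ρ^j are linearly independent over K
  have hfam : LinearIndependent K (fun q : Fin n × Fin 2 => π ^ (q.1 : ℕ) * ρ ^ (q.2 : ℕ)) := by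
    rw [Fintype.linearIndependent_iff]
    intro g hg
    -- group the sum by the first index
    set wcoef : Fin n → L := fun i =>
      algebraMap K L (g (i, 0)) + algebraMap K L (g (i, 1)) * ρ with hwcoef
    have hsum : ∑ i : Fin n, π ^ (i : ℕ) * wcoef i = 0 := by
      rw [← hg, Fintype.sum_prod_type]
      refine Finset.sum_congr rfl (fun i _ => ?_)
      rw [Fin.sum_univ_two]
      simp only [hwcoef, Fin.val_zero, Fin.val_one, pow_zero, pow_one, Algebra.smul_def]
      ring
    -- each nonzero coefficient gives a term with valuation ≡ i mod e
    have hterm : ∀ i : Fin n, ¬(g (i, 0) = 0 ∧ g (i, 1) = 0) →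
        wcoef i ≠ 0 ∧ ∃ t : ℤ, wL.v (wcoef i) = (e : ℤ) * t := by
      intro i hgi
      by_cases hg1 : g (i, 1) = 0
      · have hg0 : g (i, 0) ≠ 0 := fun h => hgi ⟨h, hg1⟩
        rw [hwcoef]
        simp only [hg1, map_zero, zero_mul, add_zero]
        exact ⟨algebraMap_ne_zero hg0, wK.v (g (i, 0)), he.2 _ hg0⟩
      · set c' := g (i, 0) / g (i, 1) with hc'
        have hgg : g (i, 1) * (g (i, 0) / g (i, 1)) = g (i, 0) := by field_simp
        have hkey : wcoef i = algebraMap K L (g (i, 1)) * (algebraMap K L c' + ρ) := by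
          rw [hwcoef, mul_add, ← map_mul, hc', hgg]
        have hinner0 : algebraMap K L c' + ρ ≠ 0 := by
          have := (hsub (-c')).1
          rwa [map_neg, sub_neg_eq_add, add_comm] at this
        have hinnerle : wL.v (algebraMap K L c' + ρ) ≤ 0 := by
          have := (hsub (-c')).2
          rwa [map_neg, sub_neg_eq_add, add_comm] at this
        have hinner : wL.v (algebraMap K L c' + ρ) = if wK.v c' < 0 ∧ c' ≠ 0 then (e : ℤ) * wK.v c' else 0 := by
          by_cases hc'0 : c' = 0
          · simp [hc'0, hρv]
          · have hvc' : wL.v (algebraMap K L c') = (e : ℤ) * wK.v c' := he.2 _ hc'0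
            by_cases hneg : wK.v c' < 0
            · rw [if_pos (⟨hneg, hc'0⟩ : wK.v c' < 0 ∧ c' ≠ 0)]
              have := v_add_lt wL (algebraMap_ne_zero hc'0) hρ0
                (by rw [hvc', hρv]; exact mul_neg_of_pos_of_neg (by exact_mod_cast he.1) hneg)
              rw [this.2, hvc']
            · rw [if_neg (by tauto)]
              push_neg at hneg
              rcases eq_or_lt_of_le hneg with heq | hlt
              · have hmin := wL.v_add _ _ (algebraMap_ne_zero hc'0) hρ0 hinner0
                rw [hvc', ← heq, hρv] at hmin
                simp at hmin
                omega
              · have := v_add_lt wL hρ0 (algebraMap_ne_zero hc'0)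
                  (by rw [hvc', hρv]; exact mul_pos (by exact_mod_cast he.1) hlt)
                rw [add_comm] at this
                rw [this.2, hρv]
        refine ⟨by rw [hkey]; exact mul_ne_zero (algebraMap_ne_zero hg1) hinner0, ?_⟩
        rw [hkey, wL.v_mul _ _ (algebraMap_ne_zero hg1) hinner0, he.2 _ hg1, hinner]
        by_cases hcase : wK.v c' < 0 ∧ c' ≠ 0
        · rw [if_pos hcase]; exact ⟨wK.v (g (i, 1)) + wK.v c', by ring⟩
        · rw [if_neg hcase]; exact ⟨wK.v (g (i, 1)), by ring⟩
    -- now use the distinct-valuation sum lemma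
    by_contra hgne
    push_neg at hgne
    obtain ⟨q₀, hq₀⟩ := hgne
    set S : Finset (Fin n) := Finset.univ.filter (fun i => ¬(g (i, 0) = 0 ∧ g (i, 1) = 0)) with hS
    have hq₀S : q₀.1 ∈ S := by
      simp only [hS, Finset.mem_filter]
      refine ⟨Finset.mem_univ _, ?_⟩
      rintro ⟨h0, h1⟩
      rcases q₀ with ⟨i, j⟩
      fin_cases j
      · exact hq₀ h0
      · exact hq₀ h1
    have hSne : S.Nonempty := ⟨q₀.1, hq₀S⟩
    have hsum' : ∑ i ∈ S, π ^ (i : ℕ) * wcoef i = 0 := by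
      rw [← hsum]
      apply Finset.sum_subset (Finset.filter_subset _ _)
      intro i _ hiS
      simp only [hS, Finset.mem_filter] at hiS
      have : g (i, 0) = 0 ∧ g (i, 1) = 0 := by
        by_contra h; exact hiS ⟨Finset.mem_univ _, h⟩
      rw [hwcoef]
      simp [this.1, this.2]
    have hterms : ∀ i ∈ S, π ^ (i : ℕ) * wcoef i ≠ 0 := by
      intro i hi
      simp only [hS, Finset.mem_filter] at hi
      exact mul_ne_zero (pow_ne_zero _ hπ0) ((hterm i hi.2).1)
    have hvals : ∀ i ∈ S, ∀ j ∈ S, i ≠ j →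
        wL.v (π ^ (i : ℕ) * wcoef i) ≠ wL.v (π ^ (j : ℕ) * wcoef j) := by
      intro i hi j hj hij
      simp only [hS, Finset.mem_filter] at hi hj
      obtain ⟨ti, hti⟩ := (hterm i hi.2).2
      obtain ⟨tj, htj⟩ := (hterm j hj.2).2
      rw [wL.v_mul _ _ (pow_ne_zero _ hπ0) ((hterm i hi.2).1),
        wL.v_mul _ _ (pow_ne_zero _ hπ0) ((hterm j hj.2).1),
        v_pow wL hπ0, v_pow wL hπ0, hπv, hti, htj]
      simp only [mul_one]
      have hin : (i : ℕ) < n := i.2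
      have hjn : (j : ℕ) < n := j.2
      have hije : (i : ℕ) ≠ (j : ℕ) := fun h => hij (Fin.ext h)
      have hen : (e : ℤ) = (n : ℤ) := by exact_mod_cast congrArg Nat.cast htot
      intro hcontra
      rw [hen] at hcontra
      have h1 : (((i : ℕ) : ℤ) + (n : ℤ) * ti) % (n : ℤ) = (((j : ℕ) : ℤ) + (n : ℤ) * tj) % (n : ℤ) := by
        rw [hcontra]
      rw [Int.add_mul_emod_self_left, Int.add_mul_emod_self_left] at h1
      have hiz : ((i : ℕ) : ℤ) % (n : ℤ) = ((i : ℕ) : ℤ) := Int.emod_eq_of_lt (by positivity) (by exact_mod_cast hin)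
      have hjz : ((j : ℕ) : ℤ) % (n : ℤ) = ((j : ℕ) : ℤ) := Int.emod_eq_of_lt (by positivity) (by exact_mod_cast hjn)
      omega
    have := (v_sum_distinct wL S _ hSne hterms hvals).1
    exact this hsum'
  have hcard := hfam.fintype_card_le_finrank
  rw [Fintype.card_prod, Fintype.card_fin, Fintype.card_fin] at hcard
  omega

end VCAux

end Part3

section Part4

namespace VCAux

set_option linter.unusedSectionVars false

variable {K L : Type} [Field K] [Field L] [Algebra K L]
variable [FiniteDimensional K L] [IsGalois K L]

/-- the bridge between `d` and the maximal valuation `s` of `1 + ker(trace)`. -/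
lemma bridge (wK : LocalFieldStruct K) (wL : LocalFieldStruct L) (e : ℕ)
    (he : wK.IsRamificationIndex wL e) (d : ℤ) (hd : wK.IsDifferentVal wL d)
    (hnK : ((Module.finrank K L : K)) ≠ 0) :
    ∃ s : ℤ, (∃ z₀ : L, Algebra.trace K L z₀ = 0 ∧ wL.v (1 + z₀) = s) ∧
      (∀ z : L, Algebra.trace K L z = 0 → wL.v (1 + z) ≤ s) ∧
      (-d - 1) = s - (e : ℤ) * (wK.v ((Module.finrank K L : K)) + 1) := by
  classical
  set nK : K := (Module.finrank K L : K) with hnKdef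
  have h1z : ∀ z : L, Algebra.trace K L z = 0 → (1 : L) + z ≠ 0 := by
    intro z hz h
    apply hnK
    have : Algebra.trace K L (1 + z) = 0 := by rw [h, map_zero]
    rwa [map_add, trace_one', hz, add_zero] at this
  have htr1z : ∀ z : L, Algebra.trace K L z = 0 → Algebra.trace K L (1 + z) = nK := by
    intro z hz
    rw [map_add, trace_one', hz, add_zero]
  -- upper bound
  have hbound : ∀ z : L, Algebra.trace K L z = 0 →
      wL.v (1 + z) ≤ (e : ℤ) * (wK.v nK + 1) - d - 1 := by
    intro z hz
    obtain ⟨c, hc0, hcv⟩ := wK.v_surj (-(wK.v nK) - 1)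
    set x := algebraMap K L c * (1 + z) with hx
    have hx0 : x ≠ 0 := mul_ne_zero (algebraMap_ne_zero hc0) (h1z z hz)
    have htrx : Algebra.trace K L x = c * nK := by rw [hx, trace_mulK, htr1z z hz]
    have hint : ¬ wK.Integral (Algebra.trace K L x) := by
      rw [htrx, LocalFieldStruct.Integral]
      push_neg
      have hcnK : c * nK ≠ 0 := mul_ne_zero hc0 hnK
      refine ⟨hcnK, ?_⟩
      rw [wK.v_mul c nK hc0 hnK, hcv]
      omega
    have hvx : wL.v x = (e : ℤ) * (-(wK.v nK) - 1) + wL.v (1 + z) := by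
      rw [hx, wL.v_mul _ _ (algebraMap_ne_zero hc0) (h1z z hz), he.2 c hc0, hcv]
    have hnotle : ¬ (-d ≤ wL.v x) := by
      intro hle
      apply hint
      exact ((hd (wL.v x)).mpr hle) x (fun _ => le_refl _)
    rw [hvx] at hnotle
    push_neg at hnotle
    have := he.1
    nlinarith [hnotle]
  obtain ⟨s, ⟨z₀, hz₀tr, hz₀v⟩, hmax⟩ :=
    Int.exists_greatest_of_bdd (P := fun t => ∃ z : L, Algebra.trace K L z = 0 ∧ wL.v (1 + z) = t)
      ⟨(e : ℤ) * (wK.v nK + 1) - d - 1, fun t ⟨z, hz, hv⟩ => hv ▸ hbound z hz⟩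
      ⟨0, 0, map_zero _, by rw [add_zero, v_one]⟩
  refine ⟨s, ⟨z₀, hz₀tr, hz₀v⟩, fun z hz => hmax _ ⟨z, hz, rfl⟩, ?_⟩
  -- two inequalities
  have hineq1 : s - (e : ℤ) * (wK.v nK + 1) ≤ -d - 1 := by
    have := hbound z₀ hz₀tr
    omega
  have hineq2 : -d - 1 ≤ s - (e : ℤ) * (wK.v nK + 1) := by
    have hnotlhs : ¬ (∀ x : L, (x ≠ 0 → -d - 1 ≤ wL.v x) →
        wK.Integral (Algebra.trace K L x)) := by
      intro h
      have := (hd (-d - 1)).mp h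
      omega
    push_neg at hnotlhs
    obtain ⟨x₀, hx₀v, hx₀int⟩ := hnotlhs
    rw [LocalFieldStruct.Integral] at hx₀int
    push_neg at hx₀int
    obtain ⟨ht0, htneg⟩ := hx₀int
    have hx₀0 : x₀ ≠ 0 := by
      intro h
      exact ht0 (by rw [h, map_zero])
    have hvx₀ : -d - 1 ≤ wL.v x₀ := hx₀v hx₀0
    set t := Algebra.trace K L x₀ with htdef
    set c := t / nK with hcdef
    have hc0 : c ≠ 0 := div_ne_zero ht0 hnK
    set z := (algebraMap K L c)⁻¹ * x₀ - 1 with hzdef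
    have htrz : Algebra.trace K L z = 0 := by
      rw [hzdef, map_sub, trace_one', ← map_inv₀, trace_mulK, ← htdef]
      rw [hcdef]
      field_simp
      rw [hnKdef, sub_self]
    have h1pz : (1 : L) + z = (algebraMap K L c)⁻¹ * x₀ := by rw [hzdef]; ring
    have hvz : wL.v ((1 : L) + z) = -((e : ℤ) * wK.v c) + wL.v x₀ := by
      rw [h1pz, wL.v_mul _ _ (inv_ne_zero (algebraMap_ne_zero hc0)) hx₀0,
        v_inv wL (algebraMap_ne_zero hc0), he.2 c hc0]
    have hle := hmax _ ⟨z, htrz, rfl⟩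
    rw [hvz] at hle
    have hvc : wK.v c = wK.v t - wK.v nK := by
      rw [hcdef, div_eq_mul_inv, wK.v_mul t nK⁻¹ ht0 (inv_ne_zero hnK), v_inv wK hnK]
      ring
    have htm1 : wK.v t ≤ -1 := by omega
    have he0 : (0 : ℤ) < (e : ℤ) := by exact_mod_cast he.1
    nlinarith [hle, hvc, htm1, hvx₀]
  omega

/-- Lemma M: no nonzero trace-zero element has valuation ≡ s mod e. -/
lemma no_traceless_in_class_s (wK : LocalFieldStruct K) (wL : LocalFieldStruct L) (e : ℕ)
    (he : wK.IsRamificationIndex wL e) (htot : e = Module.finrank K L)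
    (hnK : ((Module.finrank K L : K)) ≠ 0)
    (s : ℤ) (z₀ : L) (hz₀tr : Algebra.trace K L z₀ = 0) (hz₀v : wL.v (1 + z₀) = s)
    (hmax : ∀ z : L, Algebra.trace K L z = 0 → wL.v (1 + z) ≤ s)
    (y : L) (hy0 : y ≠ 0) (hytr : Algebra.trace K L y = 0)
    (hymod : Int.ModEq (e : ℤ) (wL.v y) s) : False := by
  have h1z : ∀ z : L, Algebra.trace K L z = 0 → (1 : L) + z ≠ 0 := by
    intro z hz h
    apply hnK
    have : Algebra.trace K L (1 + z) = 0 := by rw [h, map_zero]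
    rwa [map_add, trace_one', hz, add_zero] at this
  -- rescale y to have valuation exactly s
  obtain ⟨j, hj⟩ := Int.modEq_iff_dvd.mp hymod
  obtain ⟨c₁, hc₁0, hc₁v⟩ := wK.v_surj j
  set y' := algebraMap K L c₁ * y with hy'def
  have hy'0 : y' ≠ 0 := mul_ne_zero (algebraMap_ne_zero hc₁0) hy0
  have hy'tr : Algebra.trace K L y' = 0 := by rw [hy'def, trace_mulK, hytr, mul_zero]
  have hy'v : wL.v y' = s := by
    rw [hy'def, wL.v_mul _ _ (algebraMap_ne_zero hc₁0) hy0, he.2 c₁ hc₁0, hc₁v]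
    omega
  set ρ := (1 + z₀) * y'⁻¹ with hρdef
  have hρ0 : ρ ≠ 0 := mul_ne_zero (h1z z₀ hz₀tr) (inv_ne_zero hy'0)
  have hρv : wL.v ρ = 0 := by
    rw [hρdef, wL.v_mul _ _ (h1z z₀ hz₀tr) (inv_ne_zero hy'0), v_inv wL hy'0, hy'v, hz₀v]
    ring
  obtain ⟨c, hc⟩ := exists_residue wK wL e he htot ρ hρ0 hρv
  have hρy' : ρ * y' = 1 + z₀ := by
    rw [hρdef]
    field_simp
  rcases hc with hc | ⟨hcne, hcpos⟩
  · -- ρ = ↑c : then 1 + z₀ = ↑c * y', trace gives nK = 0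
    apply hnK
    have h1 : (1 : L) + z₀ = algebraMap K L c * y' := by rw [← hρy', hc]
    have h2 : Algebra.trace K L (1 + z₀) = (Module.finrank K L : K) := by
      rw [map_add, trace_one', hz₀tr, add_zero]
    rw [h1, trace_mulK, hy'tr, mul_zero] at h2
    exact h2.symm
  · -- improvement contradicts maximality
    set z₁ := z₀ - algebraMap K L c * y' with hz₁def
    have hz₁tr : Algebra.trace K L z₁ = 0 := by
      rw [hz₁def, map_sub, hz₀tr, trace_mulK, hy'tr, mul_zero, sub_zero]
    have hkey : (1 : L) + z₁ = (ρ - algebraMap K L c) * y' := by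
      rw [hz₁def, sub_mul, hρy']
      ring
    have hv : wL.v (1 + z₁) = wL.v (ρ - algebraMap K L c) + s := by
      rw [hkey, wL.v_mul _ _ hcne hy'0, hy'v]
    have := hmax z₁ hz₁tr
    omega

end VCAux

end Part4

section Part5

namespace VCAux

set_option linter.unusedSectionVars false

open Polynomial

variable {K L : Type} [Field K] [Field L] [Algebra K L]
variable [FiniteDimensional K L] [IsGalois K L]

lemma pow_toLinearMap_apply (τ : L ≃ₐ[K] L) (i : ℕ) : ∀ y : L,
    (τ.toLinearMap ^ i) y = (τ ^ i) y := by
  induction i with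
  | zero => intro y; simp
  | succ i ih =>
      intro y
      rw [pow_succ, pow_succ, Module.End.mul_apply, AlgEquiv.mul_apply]
      exact ih (τ y)

lemma stable_aeval (τ : L ≃ₐ[K] L) (W : Submodule K L) (hstab : ∀ w ∈ W, τ w ∈ W)
    (q : K[X]) : ∀ w ∈ W, (Polynomial.aeval (τ.toLinearMap : Module.End K L) q) w ∈ W := by
  have hpow : ∀ i : ℕ, ∀ w ∈ W, ((τ.toLinearMap : Module.End K L) ^ i) w ∈ W := by
    intro i
    induction i with
    | zero => intro w hw; simpa using hw
    | succ i ih =>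
        intro w hw
        rw [pow_succ, Module.End.mul_apply]
        exact ih _ (hstab w hw)
  induction q using Polynomial.induction_on' with
  | add p q hp hq =>
      intro w hw
      rw [map_add, LinearMap.add_apply]
      exact W.add_mem (hp w hw) (hq w hw)
  | monomial i c =>
      intro w hw
      rw [Polynomial.aeval_monomial, Module.End.mul_apply, Module.algebraMap_end_apply]
      exact W.smul_mem c (hpow i w hw)

lemma exists_eigen (m : ℕ) (hm : 0 < m) {ζ : K} (hζ : IsPrimitiveRoot ζ m)
    (τ : L ≃ₐ[K] L) (hτ : τ ^ m = 1) (W : Submodule K L) (hW : W ≠ ⊥)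
    (hstab : ∀ w ∈ W, τ w ∈ W) :
    ∃ c : K, c ^ m = 1 ∧ ∃ w ∈ W, w ≠ 0 ∧ τ w = c • w := by
  classical
  obtain ⟨w₀, hw₀W, hw₀0⟩ := (Submodule.ne_bot_iff W).mp hW
  set τl : Module.End K L := τ.toLinearMap with hτl
  have haux : ∀ S : Finset K, ∀ w ∈ W, w ≠ 0 →
      (Polynomial.aeval τl (∏ z ∈ S, (X - C z))) w = 0 →
      ∃ c ∈ S, ∃ w' ∈ W, w' ≠ 0 ∧ τ w' = c • w' := by
    intro S
    induction S using Finset.induction_on with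
    | empty =>
        intro w hw hw0 h
        rw [Finset.prod_empty, map_one, Module.End.one_apply] at h
        exact absurd h hw0
    | insert _ _ hz ih =>
        rename_i z S
        intro w hw hw0 h
        rw [Finset.prod_insert hz, map_mul, Module.End.mul_apply] at h
        set w' := (Polynomial.aeval τl (∏ z ∈ S, (X - C z))) w with hw'def
        by_cases hw'0 : w' = 0
        · obtain ⟨c, hcS, hrest⟩ := ih w hw hw0 hw'0
          exact ⟨c, Finset.mem_insert_of_mem hcS, hrest⟩
        · have hw'W : w' ∈ W := stable_aeval τ W hstab _ w hw
          rw [map_sub, LinearMap.sub_apply, Polynomial.aeval_X, Polynomial.aeval_C,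
            Module.algebraMap_end_apply, sub_eq_zero] at h
          exact ⟨z, Finset.mem_insert_self z S,
            w', hw'W, hw'0, by rw [← h]; exact (AlgEquiv.toLinearMap_apply τ w').symm⟩
  have hprod : (Polynomial.aeval τl (∏ z ∈ nthRootsFinset m (1 : K), (X - C z))) w₀ = 0 := by
    rw [← Polynomial.X_pow_sub_one_eq_prod hm hζ]
    rw [map_sub, map_pow, Polynomial.aeval_X, Polynomial.aeval_one,
      LinearMap.sub_apply, Module.End.one_apply]
    rw [hτl, pow_toLinearMap_apply τ m w₀, hτ, AlgEquiv.one_apply, sub_self]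
  obtain ⟨c, hcS, w', hw'W, hw'0, heig⟩ := haux _ w₀ hw₀W hw₀0 hprod
  exact ⟨c, (Polynomial.mem_nthRootsFinset hm 1).mp hcS, w', hw'W, hw'0, heig⟩

lemma common_eigen (m : ℕ) (hm : 0 < m) {ζ : K} (hζ : IsPrimitiveRoot ζ m)
    (habelian : ∀ σ τ : L ≃ₐ[K] L, σ * τ = τ * σ)
    (l : List (L ≃ₐ[K] L)) (hl : ∀ σ ∈ l, σ ^ m = 1)
    (W : Submodule K L) (hW : W ≠ ⊥) (hstab : ∀ σ : L ≃ₐ[K] L, ∀ w ∈ W, σ w ∈ W) :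
    ∃ W' : Submodule K L, W' ≠ ⊥ ∧ W' ≤ W ∧
      (∀ σ : L ≃ₐ[K] L, ∀ w ∈ W', σ w ∈ W') ∧
      (∀ σ ∈ l, ∃ c : K, c ^ m = 1 ∧ ∀ w ∈ W', σ w = c • w) := by
  induction l with
  | nil => exact ⟨W, hW, le_rfl, hstab, by simp⟩
  | cons τ l ih =>
      obtain ⟨W₁, hW₁, hle₁, hstab₁, hscal₁⟩ := ih (fun σ hσ => hl σ (List.mem_cons_of_mem τ hσ))
      obtain ⟨c, hcm, w₁, hw₁W, hw₁0, hw₁eig⟩ :=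
        exists_eigen m hm hζ τ (hl τ List.mem_cons_self) W₁ hW₁ (hstab₁ τ)
      set W₂ : Submodule K L := W₁ ⊓ LinearMap.ker (τ.toLinearMap - c • LinearMap.id) with hW₂
      have hmemW₂ : ∀ w : L, w ∈ W₂ ↔ (w ∈ W₁ ∧ τ w = c • w) := by
        intro w
        rw [hW₂, Submodule.mem_inf, LinearMap.mem_ker, LinearMap.sub_apply,
          LinearMap.smul_apply, LinearMap.id_apply, sub_eq_zero, AlgEquiv.toLinearMap_apply]
      have hW₂ne : W₂ ≠ ⊥ := by
        rw [Submodule.ne_bot_iff]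
        exact ⟨w₁, (hmemW₂ w₁).mpr ⟨hw₁W, hw₁eig⟩, hw₁0⟩
      have hW₂stab : ∀ σ : L ≃ₐ[K] L, ∀ w ∈ W₂, σ w ∈ W₂ := by
        intro σ w hw
        obtain ⟨hwW₁, hweig⟩ := (hmemW₂ w).mp hw
        refine (hmemW₂ (σ w)).mpr ⟨hstab₁ σ w hwW₁, ?_⟩
        calc τ (σ w) = (τ * σ) w := (AlgEquiv.mul_apply τ σ w).symm
          _ = (σ * τ) w := by rw [habelian]
          _ = σ (τ w) := AlgEquiv.mul_apply σ τ w
          _ = σ (c • w) := by rw [hweig]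
          _ = c • σ w := by
              rw [Algebra.smul_def, Algebra.smul_def, map_mul, AlgEquiv.commutes]
      refine ⟨W₂, hW₂ne, le_trans inf_le_left hle₁, hW₂stab, ?_⟩
      intro σ hσ
      rcases List.mem_cons.mp hσ with rfl | hσl
      · exact ⟨c, hcm, fun w hw => ((hmemW₂ w).mp hw).2⟩
      · obtain ⟨c', hc'm, hc'⟩ := hscal₁ σ hσl
        exact ⟨c', hc'm, fun w hw => hc' w ((hmemW₂ w).mp hw).1⟩

/-- trace-orthogonal complement of a proper subspace is nonzero -/
lemma ortho_ne_bot (V' : Submodule K L) (hV' : V' ≠ ⊤) :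
    ∃ W : Submodule K L, W ≠ ⊥ ∧
      (∀ y : L, y ∈ W ↔ ∀ v ∈ V', Algebra.trace K L (v * y) = 0) := by
  classical
  set B : L →ₗ[K] L →ₗ[K] K := LinearMap.mk₂ K (fun a b => Algebra.trace K L (a * b))
    (fun a a' b => by
      show Algebra.trace K L ((a + a') * b) =
        Algebra.trace K L (a * b) + Algebra.trace K L (a' * b)
      rw [add_mul, map_add])
    (fun c a b => by
      show Algebra.trace K L ((c • a) * b) = c • Algebra.trace K L (a * b)
      rw [smul_mul_assoc, map_smul])
    (fun a b b' => by
      show Algebra.trace K L (a * (b + b')) =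
        Algebra.trace K L (a * b) + Algebra.trace K L (a * b')
      rw [mul_add, map_add])
    (fun c a b => by
      show Algebra.trace K L (a * (c • b)) = c • Algebra.trace K L (a * b)
      rw [mul_smul_comm, map_smul]) with hB
  set Ψ : L →ₗ[K] (V' →ₗ[K] K) := (B.comp V'.subtype).flip with hΨ
  have hΨapp : ∀ y : L, ∀ v : V', Ψ y v = Algebra.trace K L ((v : L) * y) := fun y v => rfl
  refine ⟨LinearMap.ker Ψ, ?_, ?_⟩
  · intro hker
    have hinj : Function.Injective Ψ := by
      rw [← LinearMap.ker_eq_bot]; exact hker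
    have h1 := LinearMap.finrank_le_finrank_of_injective hinj
    have h2 : Module.finrank K (V' →ₗ[K] K) = Module.finrank K V' := by
      rw [Module.finrank_linearMap, Module.finrank_self, mul_one]
    have h3 : Module.finrank K V' < Module.finrank K L :=
      Submodule.finrank_lt hV'
    omega
  · intro y
    rw [LinearMap.mem_ker]
    constructor
    · intro h v hv
      have := congrArg (fun f => f ⟨v, hv⟩) h
      simpa [hΨapp] using this
    · intro h
      ext v
      simpa [hΨapp] using h v v.2

end VCAux

end Part5

section Part6

namespace VCAux

set_option linter.unusedSectionVars false
set_option maxHeartbeats 1000000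

variable {K L : Type} [Field K] [Field L] [Algebra K L]
variable [FiniteDimensional K L] [IsGalois K L]

lemma directionA (wK : LocalFieldStruct K) (wL : LocalFieldStruct L) (e : ℕ)
    (he : wK.IsRamificationIndex wL e) (d : ℤ)
    (hnK : ((Module.finrank K L : K)) ≠ 0)
    (hvc : VC K wL e d)
    (x : L) (hx0 : x ≠ 0)
    (hcoc : ∀ σ : L ≃ₐ[K] L, ∃ c : K, σ x = algebraMap K L c * x) :
    (e : ℤ) ∣ wL.v x := by
  classical
  set T₀ : L →ₗ[K] K := (Algebra.trace K L : L →ₗ[K] K) with hT₀def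
  set T₁ : L →ₗ[K] K := (Algebra.trace K L).comp (LinearMap.mulLeft K x) with hT₁def
  have hT₀app : ∀ z : L, T₀ z = Algebra.trace K L z := fun z => rfl
  have hT₁app : ∀ z : L, T₁ z = Algebra.trace K L (x * z) := fun z => rfl
  have hT₀ne : ∃ z, T₀ z ≠ 0 := ⟨1, by rw [hT₀app, trace_one']; exact hnK⟩
  have hT₁ne : ∃ z, T₁ z ≠ 0 :=
    ⟨x⁻¹, by rw [hT₁app, mul_inv_cancel₀ hx0, trace_one']; exact hnK⟩
  have hT₀stab : ∀ σ : L ≃ₐ[K] L, ∀ y : L, T₀ y = 0 → T₀ (σ y) = 0 := by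
    intro σ y hy
    rw [hT₀app, trace_comp_aut]
    exact hy
  have happlyinv : ∀ σ : L ≃ₐ[K] L, σ (σ⁻¹ x) = x := by
    intro σ
    calc σ (σ⁻¹ x) = (σ * σ⁻¹) x := (AlgEquiv.mul_apply _ _ _).symm
      _ = x := by rw [mul_inv_cancel]; exact AlgEquiv.one_apply x
  have hT₁stab : ∀ σ : L ≃ₐ[K] L, ∀ y : L, T₁ y = 0 → T₁ (σ y) = 0 := by
    intro σ y hy
    obtain ⟨c, hc⟩ := hcoc σ⁻¹
    have hxσ : x * σ y = σ ((σ⁻¹ : L ≃ₐ[K] L) x * y) := by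
      rw [map_mul, happlyinv]
    rw [hT₁app, hxσ, trace_comp_aut, hc, mul_assoc, trace_mulK]
    rw [hT₁app] at hy
    rw [hy, mul_zero]
  have hmiss0 : ∀ y : L, y ≠ 0 → T₀ y = 0 → ¬ Int.ModEq (e : ℤ) (wL.v y) (-d - 1) := by
    intro y hy0 hytr hmod
    exact not_normal_of_ker T₀ hT₀ne hT₀stab y hytr (hvc y hy0 hmod)
  have hmiss1 : ∀ y : L, y ≠ 0 → T₁ y = 0 → ¬ Int.ModEq (e : ℤ) (wL.v y) (-d - 1) := by
    intro y hy0 hytr hmod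
    exact not_normal_of_ker T₁ hT₁ne hT₁stab y hytr (hvc y hy0 hmod)
  have hmiss0' : ∀ y : L, y ≠ 0 → T₀ y = 0 →
      ¬ Int.ModEq (e : ℤ) (wL.v y) (-d - 1 + wL.v x) := by
    intro y hy0 hytr hmod
    have hz0 : x⁻¹ * y ≠ 0 := mul_ne_zero (inv_ne_zero hx0) hy0
    have hT₁z : T₁ (x⁻¹ * y) = 0 := by
      rw [hT₁app, ← mul_assoc, mul_inv_cancel₀ hx0, one_mul]
      exact hytr
    have hvz : wL.v (x⁻¹ * y) = wL.v y - wL.v x := by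
      rw [wL.v_mul _ _ (inv_ne_zero hx0) hy0, v_inv wL hx0]; ring
    apply hmiss1 _ hz0 hT₁z
    rw [hvz]
    have := Int.ModEq.sub_right (wL.v x) hmod
    simpa using this
  have hfinal := miss_le_one wK wL e he T₀ (-d - 1) (-d - 1 + wL.v x) hmiss0 hmiss0'
  have hdvd := Int.ModEq.dvd hfinal
  simpa using hdvd

lemma directionB (wK : LocalFieldStruct K) (wL : LocalFieldStruct L) (e : ℕ)
    (he : wK.IsRamificationIndex wL e) (htot : e = Module.finrank K L)
    (d : ℤ) (hd : wK.IsDifferentVal wL d)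
    (m : ℕ) (hm : 0 < m) {ζ : K} (hζ : IsPrimitiveRoot ζ m)
    (hmexp : m = Monoid.exponent (L ≃ₐ[K] L))
    (habelian : ∀ σ τ : L ≃ₐ[K] L, σ * τ = τ * σ)
    (hnK : ((Module.finrank K L : K)) ≠ 0)
    (hur : ∀ a : K, a ≠ 0 → (∃ x : L, x ^ m = algebraMap K L a) → (m : ℤ) ∣ wK.v a) :
    VC K wL e d := by
  classical
  intro x₀ hx₀ hmod
  set V' := Submodule.span K (Set.range fun σ : L ≃ₐ[K] L => σ x₀) with hV'
  by_cases hVtop : V' = ⊤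
  · constructor
    · refine linearIndependent_of_top_le_span_of_card_eq_finrank ?_ ?_
      · rw [← hV', hVtop]
      · rw [← Nat.card_eq_fintype_card, IsGalois.card_aut_eq_finrank]
    · exact hVtop
  · exfalso
    have happlyinv : ∀ σ : L ≃ₐ[K] L, ∀ z : L, σ (σ⁻¹ z) = z := by
      intro σ z
      calc σ (σ⁻¹ z) = (σ * σ⁻¹) z := (AlgEquiv.mul_apply _ _ _).symm
        _ = z := by rw [mul_inv_cancel]; exact AlgEquiv.one_apply z
    have hstabV : ∀ σ : L ≃ₐ[K] L, ∀ v ∈ V', σ v ∈ V' := by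
      intro σ v hv
      have hmap : Submodule.map σ.toLinearMap V' ≤ V' := by
        rw [hV', Submodule.map_span]
        apply Submodule.span_le.mpr
        rintro - ⟨-, ⟨τ, rfl⟩, rfl⟩
        exact Submodule.subset_span ⟨σ * τ, (AlgEquiv.mul_apply σ τ x₀).symm⟩
      exact hmap ⟨v, hv, rfl⟩
    obtain ⟨W, hWne, hWmem⟩ := ortho_ne_bot V' hVtop
    have hWstab : ∀ σ : L ≃ₐ[K] L, ∀ w ∈ W, σ w ∈ W := by
      intro σ w hw
      rw [hWmem]
      intro v hv
      have h1 : v * σ w = σ ((σ⁻¹ : L ≃ₐ[K] L) v * w) := by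
        rw [map_mul, happlyinv]
      rw [h1, trace_comp_aut]
      exact (hWmem w).mp hw _ (hstabV σ⁻¹ v hv)
    obtain ⟨W₂, hW₂ne, hW₂le, hW₂stab, hW₂scal⟩ := common_eigen m hm hζ habelian
      (Finset.univ.toList) (fun σ _ => by rw [hmexp]; exact Monoid.pow_exponent_eq_one σ)
      W hWne hWstab
    obtain ⟨ys, hysW₂, hys0⟩ := (Submodule.ne_bot_iff W₂).mp hW₂ne
    have hfix : ∀ σ : L ≃ₐ[K] L, σ (ys ^ m) = ys ^ m := by
      intro σ
      obtain ⟨c, hcm, hc⟩ := hW₂scal σ (by simp)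
      rw [map_pow, hc ys hysW₂, smul_pow, hcm, one_smul]
    have hff : IntermediateField.fixedField (⊤ : Subgroup (L ≃ₐ[K] L)) =
        (⊥ : IntermediateField K L) :=
      ((IsGalois.tfae (F := K) (E := L)).out 0 1).mp (inferInstance : IsGalois K L)
    have hmem : ys ^ m ∈ (⊥ : IntermediateField K L) := by
      rw [← hff]
      exact fun g => hfix g.1
    obtain ⟨a, ha⟩ := IntermediateField.mem_bot.mp hmem
    have ha0 : a ≠ 0 := by
      intro h
      rw [h, map_zero] at ha
      exact pow_ne_zero m hys0 ha.symm
    obtain ⟨j, hj⟩ := hur a ha0 ⟨ys, ha.symm⟩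
    have hm0 : (m : ℤ) ≠ 0 := by exact_mod_cast hm.ne'
    have hvys : wL.v ys = (e : ℤ) * j := by
      have h1 : wL.v (ys ^ m) = (m : ℤ) * wL.v ys := v_pow wL hys0 m
      have h2 : wL.v (ys ^ m) = (e : ℤ) * ((m : ℤ) * j) := by
        rw [← ha, he.2 a ha0, hj]
      apply mul_left_cancel₀ hm0
      rw [← h1, h2]; ring
    obtain ⟨s, ⟨z₀, hz₀tr, hz₀v⟩, hsmax, hbr⟩ := bridge wK wL e he d hd hnK
    have hx₀V' : x₀ ∈ V' := Submodule.subset_span ⟨1, AlgEquiv.one_apply x₀⟩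
    have htr0 : Algebra.trace K L (x₀ * ys) = 0 := (hWmem ys).mp (hW₂le hysW₂) x₀ hx₀V'
    have hy₁0 : x₀ * ys ≠ 0 := mul_ne_zero hx₀ hys0
    have hv₁ : wL.v (x₀ * ys) = wL.v x₀ + (e : ℤ) * j := by
      rw [wL.v_mul _ _ hx₀ hys0, hvys]
    apply no_traceless_in_class_s wK wL e he htot hnK s z₀ hz₀tr hz₀v hsmax
      (x₀ * ys) hy₁0 htr0
    rw [hv₁]
    obtain ⟨B, hB⟩ : ∃ t : ℤ, (e : ℤ) * (wK.v ((Module.finrank K L : K)) + 1) = t := ⟨_, rfl⟩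
    rw [hB] at hbr
    have hBdvd : (e : ℤ) ∣ B := ⟨_, hB.symm⟩
    obtain ⟨A, hA⟩ : ∃ t : ℤ, (e : ℤ) * j = t := ⟨_, rfl⟩
    rw [hA]
    have hAdvd : (e : ℤ) ∣ A := ⟨j, hA.symm⟩
    have h1 : wL.v x₀ + A ≡ (-d - 1) + A [ZMOD (e : ℤ)] := Int.ModEq.add_right A hmod
    have h2 : (-d - 1) + A ≡ (-d - 1) + 0 [ZMOD (e : ℤ)] :=
      Int.ModEq.add_left _ (Int.modEq_zero_iff_dvd.mpr hAdvd)
    have h3 : (-d - 1 : ℤ) + 0 = s - B := by omega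
    have h4 : s - B ≡ s - 0 [ZMOD (e : ℤ)] :=
      Int.ModEq.sub_left s (Int.modEq_zero_iff_dvd.mpr hBdvd)
    calc wL.v x₀ + A ≡ (-d - 1) + A [ZMOD (e : ℤ)] := h1
      _ ≡ (-d - 1) + 0 [ZMOD (e : ℤ)] := h2
      _ = s - B := h3
      _ ≡ s - 0 [ZMOD (e : ℤ)] := h4
      _ = s := by ring

end VCAux

end Part6


open LocalFieldStruct in
/-- **Theorem 1.** Let `L/K` be a totally ramified Kummer extension of local
fields whose degree is a power of the residue characteristic `p`.  Then
`VC(L/K)` holds if and only if `L` is a unit root Kummer extension of `K`,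
i.e. `v_K(W) ⊆ mℤ` where `m` is the exponent of `Gal(L/K)` and
`W = L*ᵐ ∩ K*`. -/
theorem statement12 {K L : Type} [Field K] [Field L] [Algebra K L]
    [FiniteDimensional K L] [IsGalois K L]
    (wK : LocalFieldStruct K) (wL : LocalFieldStruct L)
    (p : ℕ) (hp : wK.ResidueCharP p)
    -- `L/K` is a Kummer extension:
    (habelian : ∀ σ τ : L ≃ₐ[K] L, σ * τ = τ * σ)
    (hkummer : ∃ ζ : K, IsPrimitiveRoot ζ (Monoid.exponent (L ≃ₐ[K] L)))
    -- `L/K` is totally ramified of degree a power of `p`: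
    (e : ℕ) (he : IsRamificationIndex wK wL e)
    (htot : e = Module.finrank K L)
    (hdeg : ∃ k : ℕ, Module.finrank K L = p ^ k)
    (d : ℤ) (hd : IsDifferentVal wK wL d) :
    VC K wL e d ↔
      ∀ a : K, a ≠ 0 →
        (∃ x : L, x ^ Monoid.exponent (L ≃ₐ[K] L) = algebraMap K L a) →
        (Monoid.exponent (L ≃ₐ[K] L) : ℤ) ∣ wK.v a := by
  classical
  obtain ⟨ζ, hζ⟩ := hkummer
  by_cases hn1 : Module.finrank K L = 1
  · -- trivial case : L = K
    have hcard : Fintype.card (L ≃ₐ[K] L) = 1 := by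
      rw [← Nat.card_eq_fintype_card, IsGalois.card_aut_eq_finrank]; exact hn1
    haveI hsub : Subsingleton (L ≃ₐ[K] L) :=
      Fintype.card_le_one_iff_subsingleton.mp (le_of_eq hcard)
    have hm1 : Monoid.exponent (L ≃ₐ[K] L) = 1 := Monoid.exp_eq_one_iff.mpr hsub
    constructor
    · intro _ a ha hex
      simp [hm1]
    · intro _ x hx0 hmod
      haveI : Unique (L ≃ₐ[K] L) := ⟨⟨1⟩, fun σ => Subsingleton.elim σ 1⟩
      constructor
      · refine linearIndependent_unique_iff.mpr (fun h => hx0 ?_)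
        have hd1 : (default : L ≃ₐ[K] L) = 1 := Subsingleton.elim _ _
        have h' := h
        try simp only [hd1, AlgEquiv.one_apply] at h'
        first
        | exact h'
        | rwa [map_eq_zero_iff _ (AlgEquiv.injective _)] at h'
      · have hrange : (Set.range fun σ : L ≃ₐ[K] L => σ x) = {x} := by
          apply Set.eq_singleton_iff_unique_mem.mpr
          refine ⟨⟨1, AlgEquiv.one_apply x⟩, ?_⟩
          rintro - ⟨σ, rfl⟩
          have hσ1 : σ = 1 := Subsingleton.elim σ 1
          simp [hσ1]
        rw [hrange]
        apply Submodule.eq_top_of_finrank_eq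
        rw [finrank_span_singleton hx0, hn1]
  · -- nontrivial case
    have hn_pos : 0 < Module.finrank K L := Module.finrank_pos
    have hcard : Fintype.card (L ≃ₐ[K] L) = Module.finrank K L :=
      Nat.card_eq_fintype_card (α := L ≃ₐ[K] L) ▸ IsGalois.card_aut_eq_finrank K L
    have hmdvd : Monoid.exponent (L ≃ₐ[K] L) ∣ Module.finrank K L :=
      hcard ▸ Group.exponent_dvd_card
    have hm0 : Monoid.exponent (L ≃ₐ[K] L) ≠ 0 := Monoid.exponent_ne_zero_of_finite
    have hmne1 : Monoid.exponent (L ≃ₐ[K] L) ≠ 1 := by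
      intro h1
      haveI hsub := Monoid.exp_eq_one_iff.mp h1
      have h2 : Fintype.card (L ≃ₐ[K] L) ≤ 1 := Fintype.card_le_one_iff_subsingleton.mpr hsub
      have h3 : 0 < Fintype.card (L ≃ₐ[K] L) := Fintype.card_pos
      omega
    obtain ⟨kk, hkk⟩ := hdeg
    have hpprime := hp.1
    obtain ⟨j, hjle, hjm⟩ := (Nat.dvd_prime_pow hpprime).mp (hkk ▸ hmdvd)
    have hj1 : 1 ≤ j := by
      rcases Nat.eq_zero_or_pos j with h | h
      · rw [h, pow_zero] at hjm; exact absurd hjm hmne1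
      · exact h
    have hpdvdm : p ∣ Monoid.exponent (L ≃ₐ[K] L) := by
      rw [hjm]; exact dvd_pow_self p (by omega)
    have hmpos : 0 < Monoid.exponent (L ≃ₐ[K] L) := Nat.pos_of_ne_zero hm0
    -- residue characteristic p is nonzero in K
    have hpK : (p : K) ≠ 0 := by
      intro h0
      have hdvd : ringChar K ∣ p := (CharP.cast_eq_zero_iff K (ringChar K) p).mp h0
      have hr1 : ringChar K ≠ 1 := CharP.ringChar_ne_one
      have hrp : ringChar K = p :=
        (Nat.Prime.eq_one_or_self_of_dvd hpprime _ hdvd).resolve_left hr1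
      haveI : CharP K p := hrp ▸ ringChar.charP K
      haveI : Fact (Nat.Prime p) := ⟨hpprime⟩
      have hmp : Monoid.exponent (L ≃ₐ[K] L) / p * p = Monoid.exponent (L ≃ₐ[K] L) :=
        Nat.div_mul_cancel hpdvdm
      have hζp : (ζ ^ (Monoid.exponent (L ≃ₐ[K] L) / p) - 1) ^ p = 0 := by
        rw [sub_pow_char, one_pow, ← pow_mul, hmp, hζ.pow_eq_one, sub_self]
      have hζ1 : ζ ^ (Monoid.exponent (L ≃ₐ[K] L) / p) = 1 := by
        have := pow_eq_zero_iff hpprime.ne_zero |>.mp hζp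
        rwa [sub_eq_zero] at this
      refine hζ.pow_ne_one_of_pos_of_lt ?_ ?_ hζ1
      · exact (Nat.div_pos (Nat.le_of_dvd hmpos hpdvdm) hpprime.pos).ne'
      · exact Nat.div_lt_self hmpos hpprime.one_lt
    have hvp : 0 < wK.v (p : K) := hp.2.resolve_left hpK
    -- K has characteristic zero
    haveI hchar0 : CharZero K := by
      rcases CharP.char_is_prime_or_zero K (ringChar K) with hq | hq0
      · exfalso
        have hqp : ringChar K ≠ p := by
          intro h
          exact hpK (h ▸ CharP.cast_eq_zero K (ringChar K))
        have hco : Nat.Coprime p (ringChar K) :=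
          (Nat.coprime_primes hpprime hq).mpr (fun h => hqp h.symm)
        have hfer : p ^ (ringChar K - 1) ≡ 1 [MOD ringChar K] := by
          have := Nat.ModEq.pow_totient hco
          rwa [Nat.totient_prime hq] at this
        have hcast : ((p ^ (ringChar K - 1) : ℕ) : K) = ((1 : ℕ) : K) :=
          (CharP.natCast_eq_natCast K (ringChar K)).mpr hfer
        rw [Nat.cast_pow, Nat.cast_one] at hcast
        have hvpow := VCAux.v_pow wK hpK (ringChar K - 1)
        rw [hcast, VCAux.v_one wK] at hvpow
        have hq2 : 2 ≤ ringChar K := hq.two_le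
        have hcastpos : (0 : ℤ) < ((ringChar K - 1 : ℕ) : ℤ) := by
          exact_mod_cast Nat.sub_pos_of_lt hq.one_lt
        have hprod : (0 : ℤ) < ((ringChar K - 1 : ℕ) : ℤ) * wK.v (p : K) :=
          mul_pos hcastpos hvp
        omega
      · haveI : CharP K 0 := hq0 ▸ ringChar.charP K
        exact CharP.charP_to_charZero K
    have hnK : ((Module.finrank K L : K)) ≠ 0 := Nat.cast_ne_zero.mpr (by omega)
    constructor
    · -- VC implies unit root
      intro hvc a ha hex
      obtain ⟨x, hxm⟩ := hex
      have hx0 : x ≠ 0 := by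
        intro h
        rw [h, zero_pow hm0] at hxm
        exact ha ((map_eq_zero_iff _ (algebraMap K L).injective).mp hxm.symm)
      have hζL : IsPrimitiveRoot (algebraMap K L ζ) (Monoid.exponent (L ≃ₐ[K] L)) :=
        hζ.map_of_injective (algebraMap K L).injective
      haveI : NeZero (Monoid.exponent (L ≃ₐ[K] L)) := ⟨hm0⟩
      have hcoc : ∀ σ : L ≃ₐ[K] L, ∃ c : K, σ x = algebraMap K L c * x := by
        intro σ
        have h1 : (σ x) ^ Monoid.exponent (L ≃ₐ[K] L) = x ^ Monoid.exponent (L ≃ₐ[K] L) := by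
          rw [← map_pow, hxm, AlgEquiv.commutes]
        have hu : (σ x / x) ^ Monoid.exponent (L ≃ₐ[K] L) = 1 := by
          rw [div_pow, h1, div_self (pow_ne_zero _ hx0)]
        obtain ⟨i, -, hi⟩ := hζL.eq_pow_of_pow_eq_one hu
        refine ⟨ζ ^ i, ?_⟩
        rw [eq_div_iff hx0] at hi
        rw [map_pow]
        exact hi.symm
      have hdvdx := VCAux.directionA wK wL e he d hnK hvc x hx0 hcoc
      obtain ⟨j', hj'⟩ := hdvdx
      have h1 : (Monoid.exponent (L ≃ₐ[K] L) : ℤ) * wL.v x = (e : ℤ) * wK.v a := by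
        rw [← VCAux.v_pow wL hx0, hxm, he.2 a ha]
      have he0 : (e : ℤ) ≠ 0 := by exact_mod_cast he.1.ne'
      refine ⟨j', ?_⟩
      apply mul_left_cancel₀ he0
      rw [← h1, hj']; ring
    · -- unit root implies VC
      intro hur
      exact VCAux.directionB wK wL e he htot d hd (Monoid.exponent (L ≃ₐ[K] L)) hmpos hζ rfl
        habelian hnK hur
end

section
/- Let K be a local field of characteristic p > 0 and let L/K be a finite totally ramified Galois extension whose degree is a power of p. Then VC(L/K) holds; i.e., every x ∈ L* with v_L(x) ≡ −d_{L/K} − 1 (mod e_{L/K}) is a normal basis generator of L over K. -/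
namespace Aux

variable {K : Type} [Field K] (w : LocalFieldStruct K)

lemma v_one : w.v 1 = 0 := by
  have := w.v_mul 1 1 one_ne_zero one_ne_zero
  simp at this; linarith

lemma v_neg {x : K} (hx : x ≠ 0) : w.v (-x) = w.v x := by
  have h1 : w.v ((-1 : K) * -1) = w.v (-1) + w.v (-1) :=
    w.v_mul _ _ (by norm_num) (by norm_num)
  have h2 : w.v ((-1 : K) * x) = w.v (-1) + w.v x := w.v_mul _ _ (by norm_num) hx
  simp only [neg_mul, one_mul, neg_neg] at h1 h2
  have := v_one w
  rw [h2]; linarith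

lemma v_inv {x : K} (hx : x ≠ 0) : w.v x⁻¹ = - w.v x := by
  have := w.v_mul x x⁻¹ hx (inv_ne_zero hx)
  rw [mul_inv_cancel₀ hx, v_one w] at this
  linarith

lemma v_min {x y : K} (hx : x ≠ 0) (hy : y ≠ 0) (hlt : w.v x < w.v y) :
    x + y ≠ 0 ∧ w.v (x + y) = w.v x := by
  have hne : x + y ≠ 0 := by
    intro h
    have : x = -y := eq_neg_of_add_eq_zero_left h
    rw [this, v_neg w hy] at hlt; exact lt_irrefl _ hlt
  refine ⟨hne, ?_⟩
  have h1 : min (w.v x) (w.v y) ≤ w.v (x + y) := w.v_add x y hx hy hne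
  rw [min_eq_left hlt.le] at h1
  rcases h1.lt_or_eq with h2 | h2
  · exfalso
    have h3 : min (w.v (x + y)) (w.v (-y)) ≤ w.v ((x + y) + -y) :=
      w.v_add _ _ hne (neg_ne_zero.mpr hy) (by simpa using hx)
    rw [add_neg_cancel_right, v_neg w hy] at h3
    rcases min_le_iff.mp h3 with h | h <;> linarith
  · exact h2.symm

lemma v_pow {x : K} (hx : x ≠ 0) (n : ℕ) : w.v (x ^ n) = n * w.v x := by
  induction n with
  | zero => simpa using v_one w
  | succ n ih =>
    rw [pow_succ, w.v_mul _ _ (pow_ne_zero n hx) hx, ih]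
    push_cast; ring

lemma sum_dv {ι : Type*} (s : Finset ι) (f : ι → K)
    (h0 : ∀ i ∈ s, f i ≠ 0)
    (hdist : ∀ i ∈ s, ∀ j ∈ s, i ≠ j → w.v (f i) ≠ w.v (f j))
    (hs : s.Nonempty) :
    ∃ i ∈ s, (∑ j ∈ s, f j) ≠ 0 ∧ w.v (∑ j ∈ s, f j) = w.v (f i) ∧
      ∀ j ∈ s, w.v (f i) ≤ w.v (f j) := by
  classical
  induction s using Finset.cons_induction with
  | empty => exact absurd hs (by simp)
  | cons a s ha ih =>
    rw [Finset.sum_cons]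
    by_cases hse : s.Nonempty
    · obtain ⟨i, hi, hne, hv, hmin⟩ := ih (fun j hj => h0 j (Finset.mem_cons_of_mem hj))
        (fun i hi j hj hij => hdist i (Finset.mem_cons_of_mem hi) j
          (Finset.mem_cons_of_mem hj) hij) hse
      have hfa : f a ≠ 0 := h0 a (Finset.mem_cons_self a s)
      have hai : a ≠ i := fun h => ha (h ▸ hi)
      have hvne : w.v (f a) ≠ w.v (f i) :=
        hdist a (Finset.mem_cons_self a s) i (Finset.mem_cons_of_mem hi) hai
      rcases hvne.lt_or_gt with hlt | hlt
      · have hlt' : w.v (f a) < w.v (∑ j ∈ s, f j) := by rw [hv]; exact hlt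
        obtain ⟨hne2, hv2⟩ := v_min w hfa hne hlt'
        refine ⟨a, Finset.mem_cons_self a s, hne2, hv2, ?_⟩
        intro j hj
        rcases Finset.mem_cons.mp hj with rfl | hj
        · exact le_refl _
        · exact hlt.le.trans (hmin j hj)
      · have hlt' : w.v (∑ j ∈ s, f j) < w.v (f a) := by rw [hv]; exact hlt
        obtain ⟨hne2, hv2⟩ := v_min w hne hfa hlt'
        rw [add_comm (f a)]
        refine ⟨i, Finset.mem_cons_of_mem hi, hne2, by rw [hv2, hv], ?_⟩
        intro j hj
        rcases Finset.mem_cons.mp hj with rfl | hj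
        · exact hlt.le
        · exact hmin j hj
    · have hs0 : s = ∅ := Finset.not_nonempty_iff_eq_empty.mp hse
      subst hs0
      refine ⟨a, Finset.mem_cons_self a _, ?_⟩
      simp [h0 a (Finset.mem_cons_self a _)]

end Aux

namespace Aux2
open Aux

variable {K L : Type} [Field K] [Field L] [Algebra K L]

lemma amap_ne {c : K} (hc : c ≠ 0) : algebraMap K L c ≠ 0 := by
  simpa using (map_ne_zero (algebraMap K L)).mpr hc

lemma key (wK : LocalFieldStruct K) (wL : LocalFieldStruct L) {e : ℕ}
    (hepos : 0 < e)
    (he2 : ∀ x : K, x ≠ 0 → wL.v (algebraMap K L x) = (e : ℤ) * wK.v x)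
    {u : L} (hu0 : u ≠ 0) (huv : wL.v u = 0)
    (h : ∀ c : K, c ≠ 0 → u ≠ algebraMap K L c ∧ ¬ (1 ≤ wL.v (u - algebraMap K L c)))
    (a b : K) (hab : ¬(a = 0 ∧ b = 0)) :
    algebraMap K L a + algebraMap K L b * u ≠ 0 ∧
      ∃ r : ℤ, wL.v (algebraMap K L a + algebraMap K L b * u) = (e : ℤ) * r := by
  by_cases hb : b = 0
  · have ha : a ≠ 0 := fun h' => hab ⟨h', hb⟩
    subst hb
    simp only [map_zero, zero_mul, add_zero]
    exact ⟨amap_ne ha, wK.v a, he2 a ha⟩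
  by_cases ha : a = 0
  · subst ha
    simp only [map_zero, zero_add]
    refine ⟨mul_ne_zero (amap_ne hb) hu0, wK.v b, ?_⟩
    rw [wL.v_mul _ _ (amap_ne hb) hu0, huv, he2 b hb, add_zero]
  -- both nonzero
  set q : K := a * b⁻¹ with hq
  have hqne : q ≠ 0 := mul_ne_zero ha (inv_ne_zero hb)
  have hfac : algebraMap K L a + algebraMap K L b * u
      = algebraMap K L b * (algebraMap K L q + u) := by
    rw [mul_add, ← map_mul]
    congr 2
    rw [hq]; field_simp
  obtain ⟨hune, hvle⟩ := h (-q) (neg_ne_zero.mpr hqne)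
  have hwne : algebraMap K L q + u ≠ 0 := by
    intro h'
    apply hune
    rw [map_neg]
    linear_combination (norm := ring_nf) h'
  have hweq : u - algebraMap K L (-q) = algebraMap K L q + u := by
    rw [map_neg]; ring
  rw [hweq] at hvle
  push_neg at hvle
  have hvle' : wL.v (algebraMap K L q + u) ≤ 0 := by omega
  rcases lt_or_ge (wK.v q) 0 with hqv | hqv
  · have hlt : wL.v (algebraMap K L q) < wL.v u := by
      rw [he2 q hqne, huv]
      have he1 : (1 : ℤ) ≤ (e : ℤ) := by exact_mod_cast hepos
      nlinarith
    obtain ⟨_, hveq⟩ := v_min wL (amap_ne hqne) hu0 hlt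
    refine ⟨by rw [hfac]; exact mul_ne_zero (amap_ne hb) hwne, wK.v b + wK.v q, ?_⟩
    rw [hfac, wL.v_mul _ _ (amap_ne hb) hwne, hveq, he2 b hb, he2 q hqne]
    ring
  · have hge : (0 : ℤ) ≤ wL.v (algebraMap K L q + u) := by
      have := wL.v_add _ _ (amap_ne hqne) hu0 hwne
      rw [he2 q hqne, huv] at this
      have hmin : min ((e : ℤ) * wK.v q) 0 ≤ wL.v (algebraMap K L q + u) := this
      have h0le : (0:ℤ) ≤ (e : ℤ) * wK.v q := by positivity
      omega
    have hv0 : wL.v (algebraMap K L q + u) = 0 := le_antisymm hvle' hge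
    refine ⟨by rw [hfac]; exact mul_ne_zero (amap_ne hb) hwne, wK.v b, ?_⟩
    rw [hfac, wL.v_mul _ _ (amap_ne hb) hwne, hv0, he2 b hb, add_zero]

end Aux2

namespace Aux2
open Aux

variable {K L : Type} [Field K] [Field L] [Algebra K L]

lemma approx [FiniteDimensional K L] (wK : LocalFieldStruct K) (wL : LocalFieldStruct L)
    {e : ℕ} (hepos : 0 < e)
    (he2 : ∀ x : K, x ≠ 0 → wL.v (algebraMap K L x) = (e : ℤ) * wK.v x)
    (htot : e = Module.finrank K L)
    {u : L} (hu0 : u ≠ 0) (huv : wL.v u = 0) :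
    ∃ c : K, c ≠ 0 ∧ (u = algebraMap K L c ∨ 1 ≤ wL.v (u - algebraMap K L c)) := by
  classical
  by_contra hcon
  push_neg at hcon
  have h : ∀ c : K, c ≠ 0 → u ≠ algebraMap K L c ∧ ¬ (1 ≤ wL.v (u - algebraMap K L c)) := by
    intro c hc
    obtain ⟨h1, h2⟩ := hcon c hc
    exact ⟨h1, by omega⟩
  obtain ⟨π, hπ0, hπ1⟩ := wL.v_surj 1
  set g : Fin 2 × Fin e → L := fun ji => (if ji.1 = 0 then 1 else u) * π ^ (ji.2 : ℕ) with hg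
  have hli : LinearIndependent K g := by
    rw [Fintype.linearIndependent_iff]
    intro cf hsum ji
    set s : Fin e → L := fun i =>
      algebraMap K L (cf (0, i)) + algebraMap K L (cf (1, i)) * u with hsdef
    have hs : ∑ i : Fin e, s i * π ^ (i : ℕ) = 0 := by
      rw [← hsum, Fintype.sum_prod_type_right]
      refine Finset.sum_congr rfl fun i _ => ?_
      rw [Fin.sum_univ_two]
      simp only [hg, hsdef, Algebra.smul_def]
      norm_num
      ring
    set T : Finset (Fin e) := Finset.univ.filter (fun i => ¬(cf (0, i) = 0 ∧ cf (1, i) = 0))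
      with hT
    have hTsum : ∑ i ∈ T, s i * π ^ (i : ℕ) = 0 := by
      rw [← hs]
      apply Finset.sum_subset (Finset.subset_univ T)
      intro i _ hiT
      have : cf (0, i) = 0 ∧ cf (1, i) = 0 := by
        by_contra hcc
        exact hiT (Finset.mem_filter.mpr ⟨Finset.mem_univ i, hcc⟩)
      simp [hsdef, this.1, this.2]
    have hTe : T = ∅ := by
      by_contra hTne
      obtain ⟨i, hiT, hne, _, _⟩ := sum_dv wL T (fun i => s i * π ^ (i : ℕ))
        (fun i hi => by
          obtain ⟨hs0, _⟩ := key wK wL hepos he2 hu0 huv h (cf (0, i)) (cf (1, i))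
            (Finset.mem_filter.mp hi).2
          exact mul_ne_zero hs0 (pow_ne_zero _ hπ0))
        (fun i hi j hj hij => by
          obtain ⟨hsi, ri, hri⟩ := key wK wL hepos he2 hu0 huv h (cf (0, i)) (cf (1, i))
            (Finset.mem_filter.mp hi).2
          obtain ⟨hsj, rj, hrj⟩ := key wK wL hepos he2 hu0 huv h (cf (0, j)) (cf (1, j))
            (Finset.mem_filter.mp hj).2
          rw [wL.v_mul _ _ hsi (pow_ne_zero _ hπ0), wL.v_mul _ _ hsj (pow_ne_zero _ hπ0),
            v_pow wL hπ0, v_pow wL hπ0, hπ1, hri, hrj]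
          have hij' : (i : ℕ) ≠ (j : ℕ) := fun hcc => hij (Fin.val_injective hcc)
          have hijZ : (i : ℤ) ≠ (j : ℤ) := by exact_mod_cast hij'
          have hilt : ((i : ℕ) : ℤ) < e := by exact_mod_cast i.isLt
          have hjlt : ((j : ℕ) : ℤ) < e := by exact_mod_cast j.isLt
          have hinn : (0:ℤ) ≤ ((i : ℕ) : ℤ) := Int.ofNat_nonneg _
          have hjnn : (0:ℤ) ≤ ((j : ℕ) : ℤ) := Int.ofNat_nonneg _
          have hepos' : (0:ℤ) < e := by exact_mod_cast hepos
          intro hcc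
          obtain ⟨t, ht⟩ : (e:ℤ) ∣ (((i : ℕ) : ℤ) - ((j : ℕ) : ℤ)) :=
            ⟨rj - ri, by linarith⟩
          rcases lt_trichotomy t 0 with hts | hts | hts
          · have h1 : t ≤ -1 := by omega
            nlinarith
          · rw [hts, mul_zero] at ht
            exact hijZ (by omega)
          · have h1 : 1 ≤ t := hts
            nlinarith)
        (Finset.nonempty_iff_ne_empty.mpr hTne)
      exact hne hTsum
    have hniT : ji.2 ∉ T := hTe ▸ Finset.notMem_empty _
    have hcc : cf (0, ji.2) = 0 ∧ cf (1, ji.2) = 0 := by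
      by_contra hcc
      exact hniT (Finset.mem_filter.mpr ⟨Finset.mem_univ _, hcc⟩)
    obtain ⟨j, i⟩ := ji
    fin_cases j
    · exact hcc.1
    · exact hcc.2
  have hcard := hli.fintype_card_le_finrank
  rw [Fintype.card_prod, Fintype.card_fin, Fintype.card_fin, ← htot] at hcard
  omega

lemma trace_ne_zero (wK : LocalFieldStruct K) (wL : LocalFieldStruct L) [FiniteDimensional K L]
    {e : ℕ} (hepos : 0 < e)
    (he2 : ∀ x : K, x ≠ 0 → wL.v (algebraMap K L x) = (e : ℤ) * wK.v x)
    (htot : e = Module.finrank K L) {d : ℤ}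
    (hd : ∀ i : ℤ, (∀ x : L, (x ≠ 0 → i ≤ wL.v x) →
      ((Algebra.trace K L x) = 0 ∨ 0 ≤ wK.v (Algebra.trace K L x))) ↔ -d ≤ i)
    {x : L} (hx : x ≠ 0) (hmod : (e : ℤ) ∣ (-d - 1 - wL.v x)) :
    Algebra.trace K L x ≠ 0 := by
  -- Step 1: a witness `y` of valuation `-d-1` with non-integral trace.
  have h1 : ¬ (∀ y : L, (y ≠ 0 → -d - 1 ≤ wL.v y) →
      ((Algebra.trace K L y) = 0 ∨ 0 ≤ wK.v (Algebra.trace K L y))) := by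
    intro hcon
    have := (hd (-d - 1)).mp hcon
    omega
  push_neg at h1
  obtain ⟨y, hy1, hy2, hy3⟩ := h1
  have hy0 : y ≠ 0 := by
    intro hcc
    subst hcc
    simp at hy2
  have hyv : wL.v y = -d - 1 := by
    have hge := hy1 hy0
    by_contra hne'
    have hge' : -d ≤ wL.v y := by omega
    rcases (hd (-d)).mpr le_rfl y (fun _ => hge') with hcc | hcc
    · exact hy2 hcc
    · omega
  -- Step 2: scale `x` to valuation `-d-1`.
  intro hTr0
  obtain ⟨m, hm⟩ := hmod
  obtain ⟨u, hu0, huv⟩ := wK.v_surj (-m)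
  have hamu : algebraMap K L u ≠ 0 := amap_ne hu0
  set x' : L := x * (algebraMap K L u)⁻¹ with hx'def
  have hx'0 : x' ≠ 0 := mul_ne_zero hx (inv_ne_zero hamu)
  have hvx' : wL.v x' = -d - 1 := by
    rw [hx'def, wL.v_mul _ _ hx (inv_ne_zero hamu), v_inv wL hamu, he2 u hu0, huv]
    linarith
  have hx'smul : x' = u⁻¹ • x := by
    rw [Algebra.smul_def, map_inv₀]
    ring
  have hTrx' : Algebra.trace K L x' = 0 := by
    rw [hx'smul, map_smul, hTr0, smul_zero]
  -- Step 3: approximate `y / x'` by a constant.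
  have ht0 : y * x'⁻¹ ≠ 0 := mul_ne_zero hy0 (inv_ne_zero hx'0)
  have htv : wL.v (y * x'⁻¹) = 0 := by
    rw [wL.v_mul _ _ hy0 (inv_ne_zero hx'0), v_inv wL hx'0, hyv, hvx']
    ring
  obtain ⟨c, hc0, hcase⟩ := approx wK wL hepos he2 htot ht0 htv
  have hker : ∀ w : L, y = algebraMap K L c * x' + w →
      (Algebra.trace K L w = 0 ∨ 0 ≤ wK.v (Algebra.trace K L w)) → False := by
    intro w hw hint
    have hTry : Algebra.trace K L y = Algebra.trace K L w := by
      rw [hw, map_add, ← Algebra.smul_def, map_smul, hTrx', smul_zero, zero_add]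
    rw [hTry] at hy2 hy3
    rcases hint with hcc | hcc
    · exact hy2 hcc
    · omega
  rcases hcase with heq | hge1
  · refine hker 0 ?_ (Or.inl (map_zero _))
    rw [add_zero, ← heq]
    field_simp
  · by_cases hz0 : y * x'⁻¹ - algebraMap K L c = 0
    · refine hker 0 ?_ (Or.inl (map_zero _))
      rw [add_zero]
      have : y * x'⁻¹ = algebraMap K L c := by linear_combination hz0
      rw [← this]
      field_simp
    · set z : L := (y * x'⁻¹ - algebraMap K L c) * x' with hzdef
      have hzne : z ≠ 0 := mul_ne_zero hz0 hx'0
      have hvz : -d ≤ wL.v z := by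
        rw [hzdef, wL.v_mul _ _ hz0 hx'0, hvx']
        linarith
      refine hker z ?_ ((hd (-d)).mpr le_rfl z (fun _ => hvz))
      rw [hzdef]
      field_simp
      ring

end Aux2

namespace Aux3

variable {K L : Type} [Field K] [Field L] [Algebra K L] [FiniteDimensional K L] [IsGalois K L]

lemma li_of_trace_ne_zero (p : ℕ) (hprime : p.Prime) [CharP K p]
    (hdeg : ∃ k : ℕ, Module.finrank K L = p ^ k)
    {x : L} (hx : Algebra.trace K L x ≠ 0) :
    LinearIndependent K (fun σ : L ≃ₐ[K] L => σ x) := by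
  classical
  haveI : NeZero p := ⟨hprime.ne_zero⟩
  haveI : Fact p.Prime := ⟨hprime⟩
  obtain ⟨k, hk⟩ := hdeg
  have hcard : Fintype.card (L ≃ₐ[K] L) = p ^ k := by
    rw [← Nat.card_eq_fintype_card, IsGalois.card_aut_eq_finrank, hk]
  have hpg : IsPGroup p (L ≃ₐ[K] L) :=
    IsPGroup.of_card (by rw [Nat.card_eq_fintype_card, hcard])
  rw [Fintype.linearIndependent_iff]
  intro cf hsum i0
  by_contra hne0
  haveI M : Module (ZMod p) ((L ≃ₐ[K] L) → K) := AddCommGroup.zmodModule (by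
    intro f
    funext g
    show p • f g = 0
    simp [nsmul_eq_mul, CharP.cast_eq_zero K p])
  have hzsmul : ∀ (z : ZMod p) (f : (L ≃ₐ[K] L) → K), z • f = z.val • f := by
    intro z f
    rw [← Nat.cast_smul_eq_nsmul (ZMod p) z.val f, ZMod.natCast_val, ZMod.cast_id]
  set S : Set ((L ≃ₐ[K] L) → K) :=
    Set.range (fun τ : L ≃ₐ[K] L => fun g => cf (τ⁻¹ * g)) with hS
  set W : Submodule (ZMod p) ((L ≃ₐ[K] L) → K) := Submodule.span (ZMod p) S with hW
  have hSfin : S.Finite := by rw [hS]; exact Set.finite_range _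
  haveI : Module.Finite (ZMod p) ↥W := by
    rw [hW]
    exact Module.Finite.span_of_finite _ hSfin
  haveI : Finite ↥W := Module.finite_of_finite (ZMod p)
  have hactmem : ∀ (τ : L ≃ₐ[K] L) (f : (L ≃ₐ[K] L) → K), f ∈ W →
      (fun g => f (τ⁻¹ * g)) ∈ W := by
    intro τ f hf
    refine Submodule.span_induction ?_ ?_ ?_ ?_ hf
    · rintro f' ⟨ρ, rfl⟩
      apply Submodule.subset_span
      refine ⟨τ * ρ, ?_⟩
      funext g
      simp [mul_inv_rev, mul_assoc]
    · exact W.zero_mem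
    · intro f₁ f₂ _ _ h₁ h₂
      exact W.add_mem h₁ h₂
    · intro z f₁ _ h₁
      have heq : (fun g => (z • f₁) (τ⁻¹ * g)) = z • (fun g => f₁ (τ⁻¹ * g)) := by
        rw [hzsmul, hzsmul]
        rfl
      rw [heq]
      exact W.smul_mem z h₁
  letI : MulAction (L ≃ₐ[K] L) W :=
    { smul := fun τ w => ⟨fun g => (w : (L ≃ₐ[K] L) → K) (τ⁻¹ * g), hactmem τ _ w.2⟩
      one_smul := fun w => Subtype.ext (funext fun g => by
        show (w : (L ≃ₐ[K] L) → K) ((1 : L ≃ₐ[K] L)⁻¹ * g) = _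
        rw [inv_one, one_mul])
      mul_smul := fun σ τ w => Subtype.ext (funext fun g => by
        show (w : (L ≃ₐ[K] L) → K) ((σ * τ)⁻¹ * g)
          = (w : (L ≃ₐ[K] L) → K) (τ⁻¹ * (σ⁻¹ * g))
        rw [mul_inv_rev, mul_assoc]) }
  have hsmul_def : ∀ (τ : L ≃ₐ[K] L) (w : W),
      ((τ • w : W) : (L ≃ₐ[K] L) → K) = fun g => (w : (L ≃ₐ[K] L) → K) (τ⁻¹ * g) :=
    fun τ w => rfl
  have hcfW : cf ∈ W := Submodule.subset_span ⟨1, by funext g; simp⟩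
  have hcfne : (⟨cf, hcfW⟩ : W) ≠ 0 := by
    intro hcc
    apply hne0
    have := congrFun (congrArg (Subtype.val) hcc) i0
    simpa using this
  haveI : Nontrivial ↥W := ⟨⟨cf, hcfW⟩, 0, hcfne⟩
  haveI : Fintype ↥W := Fintype.ofFinite _
  have hdvd : p ∣ Nat.card ↥W := by
    rw [Nat.card_eq_fintype_card, Module.card_eq_pow_finrank (K := ZMod p) (V := ↥W), ZMod.card]
    exact dvd_pow_self p (Module.finrank_pos (R := ZMod p) (M := ↥W)).ne'
  have hdvd2 : p ∣ Nat.card (MulAction.fixedPoints (L ≃ₐ[K] L) W) :=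
    (Nat.modEq_zero_iff_dvd).mp
      ((hpg.card_modEq_card_fixedPoints W).symm.trans (Nat.modEq_zero_iff_dvd.mpr hdvd))
  have h0fixed : (0 : W) ∈ MulAction.fixedPoints (L ≃ₐ[K] L) W := by
    intro τ
    exact Subtype.ext (funext fun g => rfl)
  haveI : Fintype (MulAction.fixedPoints (L ≃ₐ[K] L) W) := Fintype.ofFinite _
  have hcard2 : 1 < Fintype.card (MulAction.fixedPoints (L ≃ₐ[K] L) W) := by
    have h1 : 0 < Fintype.card (MulAction.fixedPoints (L ≃ₐ[K] L) W) :=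
      Fintype.card_pos_iff.mpr ⟨⟨0, h0fixed⟩⟩
    rw [Nat.card_eq_fintype_card] at hdvd2
    have hple := Nat.le_of_dvd h1 hdvd2
    have := hprime.two_le
    omega
  obtain ⟨w, hwne⟩ := Fintype.exists_ne_of_one_lt_card hcard2 ⟨0, h0fixed⟩
  have hwne0 : (w : W) ≠ 0 := fun h => hwne (Subtype.ext h)
  set f : (L ≃ₐ[K] L) → K := ((w : W) : (L ≃ₐ[K] L) → K) with hf
  have hconst : ∀ g : L ≃ₐ[K] L, f g = f 1 := by
    intro g
    have h2 := congrFun (congrArg Subtype.val (w.2 g)) g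
    rw [hsmul_def] at h2
    simpa using h2.symm
  have hκ : f 1 ≠ 0 := by
    intro hcc
    apply hwne0
    apply Subtype.ext
    funext g
    exact (hconst g).trans hcc
  have hP : ∀ f' ∈ W, ∑ σ : L ≃ₐ[K] L, f' σ • σ x = 0 := by
    intro f' hf'
    refine Submodule.span_induction ?_ ?_ ?_ ?_ hf'
    · rintro f'' ⟨τ, rfl⟩
      have h1 := congrArg τ hsum
      rw [map_sum, map_zero] at h1
      have h2 : ∑ σ : L ≃ₐ[K] L, cf σ • τ (σ x) = 0 := by
        rw [← h1]
        exact Finset.sum_congr rfl fun σ _ => by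
          rw [Algebra.smul_def, Algebra.smul_def, map_mul, AlgEquiv.commutes]
      calc ∑ σ : L ≃ₐ[K] L, (fun g => cf (τ⁻¹ * g)) σ • σ x
          = ∑ σ : L ≃ₐ[K] L, cf σ • τ (σ x) := by
            refine Fintype.sum_equiv (Equiv.mulLeft τ⁻¹) _ _ fun ρ => ?_
            have : τ (τ⁻¹ (ρ x)) = ρ x := by
              exact τ.apply_symm_apply (ρ x)
            simp [AlgEquiv.mul_apply, this]
        _ = 0 := h2
    · simp
    · intro f₁ f₂ _ _ h₁ h₂
      have hsplit : ∑ σ : L ≃ₐ[K] L, (f₁ + f₂) σ • σ x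
          = (∑ σ : L ≃ₐ[K] L, f₁ σ • σ x) + ∑ σ : L ≃ₐ[K] L, f₂ σ • σ x := by
        rw [← Finset.sum_add_distrib]
        exact Finset.sum_congr rfl fun σ _ => by
          show (f₁ σ + f₂ σ) • σ x = _
          rw [add_smul]
      rw [hsplit, h₁, h₂, add_zero]
    · intro z f₁ _ h₁
      rw [hzsmul]
      have : ∑ σ : L ≃ₐ[K] L, (z.val • f₁) σ • σ x
          = (z.val : K) • ∑ σ : L ≃ₐ[K] L, f₁ σ • σ x := by
        rw [Finset.smul_sum]
        refine Finset.sum_congr rfl fun σ _ => ?_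
        show (z.val • f₁ σ) • σ x = _
        rw [nsmul_eq_mul, mul_smul]
      rw [this, h₁, smul_zero]
  have hkey := hP f w.1.2
  have hsum1 : ∑ σ : L ≃ₐ[K] L, f σ • σ x = f 1 • ∑ σ : L ≃ₐ[K] L, σ x := by
    rw [Finset.smul_sum]
    exact Finset.sum_congr rfl fun σ _ => by rw [hconst σ]
  rw [hsum1] at hkey
  rcases smul_eq_zero.mp hkey with hcc | hcc
  · exact hκ hcc
  · apply hx
    have h3 := trace_eq_sum_automorphisms (K := K) x
    rw [hcc] at h3
    exact (map_eq_zero (algebraMap K L)).mp h3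

end Aux3

open LocalFieldStruct in
/-- (Elder, Thomas.)  Let `K` be a local field of characteristic `p > 0` and
let `L/K` be a finite totally ramified Galois extension whose degree is a
power of `p`.  Then `VC(L/K)` holds. -/
theorem statement15 {K L : Type} [Field K] [Field L] [Algebra K L]
    [FiniteDimensional K L] [IsGalois K L]
    (wK : LocalFieldStruct K) (wL : LocalFieldStruct L)
    (p : ℕ) (hprime : p.Prime) [CharP K p]
    (e : ℕ) (he : IsRamificationIndex wK wL e)
    (htot : e = Module.finrank K L)
    (hdeg : ∃ k : ℕ, Module.finrank K L = p ^ k)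
    (d : ℤ) (hd : IsDifferentVal wK wL d) :
    VC K wL e d := by
  intro x hx hmod
  have hd' : ∀ i : ℤ, (∀ y : L, (y ≠ 0 → i ≤ wL.v y) →
      ((Algebra.trace K L y) = 0 ∨ 0 ≤ wK.v (Algebra.trace K L y))) ↔ -d ≤ i := hd
  have hmod' : (e : ℤ) ∣ (-d - 1 - wL.v x) := hmod.dvd
  have htr : Algebra.trace K L x ≠ 0 :=
    Aux2.trace_ne_zero wK wL he.1 he.2 htot hd' hx hmod'
  have hli := Aux3.li_of_trace_ne_zero p hprime hdeg htr
  refine ⟨hli, ?_⟩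
  exact hli.span_eq_top_of_card_eq_finrank (by rw [← Nat.card_eq_fintype_card]; exact IsGalois.card_aut_eq_finrank K L)
end
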